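/- arXiv:2207.12336 — 8 statements merged into one kernel-verified Lean document; each statement's English description precedes it below -/
import Mathlib

section
/- Let G be a graph on n > 2 vertices with n even and k = n/2. Then the complement automorphism 𝔠 of F_k(G) (sending each k-set to its complement) is not in the image of ι : Aut(G) → Aut(F_k(G)), where ι(φ)(A) = {φ(v) : v ∈ A}. -/
open Finset

/-- The `k`-token graph of a graph `G`. -/
def tokenGraph {V : Type*} [DecidableEq V] (G : SimpleGraph V) (k : ℕ) :
    SimpleGraph {s : Finset V // s.card = k} where
  Adj A B := ∃ a b : V, G.Adj a b ∧ symmDiff A.1 B.1 = {a, b}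
  symm := by
    constructor
    rintro A B ⟨a, b, hab, h⟩
    exact ⟨a, b, hab, by rwa [symmDiff_comm]⟩
  loopless := by
    constructor
    rintro A ⟨a, b, hab, h⟩
    rw [symmDiff_self] at h
    exact (Finset.insert_ne_empty a {b}) h.symm

/-- For n > 2 even and k = n/2, the complement automorphism of
F_k(G) is not induced by any automorphism of G. -/
theorem complement_not_induced {V : Type*} [Fintype V] [DecidableEq V]
    (G : SimpleGraph V) (n k : ℕ)
    (hn : Fintype.card V = n) (hn2 : 2 < n) (hk : n = 2 * k) :
    ¬ ∃ φ : G ≃g G,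
        ∀ A : {s : Finset V // s.card = k}, A.1.image φ = A.1ᶜ := by
  rintro ⟨φ, hφ⟩
  have hk2 : 2 ≤ k := by omega
  have hx : Nonempty V := by
    rw [← Fintype.card_pos_iff, hn]; omega
  obtain ⟨x⟩ := hx
  set w := φ x with hw
  have hs : ({x, w} : Finset V).card ≤ k :=
    le_trans (Finset.card_insert_le _ _) (by simp; omega)
  obtain ⟨A, hsub, hcard⟩ := Finset.exists_superset_card_eq hs (by rw [hn]; omega)
  have hmem : w ∈ A.image φ := Finset.mem_image_of_mem φ (hsub (by simp))
  rw [hφ ⟨A, hcard⟩, Finset.mem_compl] at hmem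
  exact hmem (hsub (by simp))
end

section
/- Let G be a graph on n ≥ 3 vertices, n even, k = n/2. For every automorphism ψ of G, the induced automorphism ι(ψ) of F_k(G) commutes with the complement automorphism 𝔠, and 𝔠² is the identity; consequently the subgroup of Aut(F_k(G)) generated by ι(Aut(G)) and 𝔠 is isomorphic to Aut(G) × ℤ/2ℤ. -/
open Finset

namespace TokenAux

variable {V : Type*} [DecidableEq V] {G : SimpleGraph V} {k : ℕ}

lemma adj_image (ψ : G ≃g G) {A B : {s : Finset V // s.card = k}}
    (h : (tokenGraph G k).Adj A B) :
    ∃ a b : V, G.Adj a b ∧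
      symmDiff (A.1.image ψ) (B.1.image ψ) = {a, b} := by
  obtain ⟨a, b, hab, h⟩ := h
  refine ⟨ψ a, ψ b, ψ.map_adj_iff.2 hab, ?_⟩
  rw [← Finset.image_symmDiff _ _ ψ.injective, h]
  simp

/-- The automorphism of the token graph induced by an automorphism of `G`. -/
def iotaMap (ψ : G ≃g G) : tokenGraph G k ≃g tokenGraph G k where
  toFun A := ⟨A.1.image ψ, by rw [Finset.card_image_of_injective _ ψ.injective, A.2]⟩
  invFun A := ⟨A.1.image ψ.symm, by
    rw [Finset.card_image_of_injective _ ψ.symm.injective, A.2]⟩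
  left_inv A := Subtype.ext (by simp [Finset.image_image, Function.comp_def])
  right_inv A := Subtype.ext (by simp [Finset.image_image, Function.comp_def])
  map_rel_iff' := by
    intro A B
    constructor
    · intro h
      have h2 := adj_image ψ.symm h
      exact (by simpa [Finset.image_image, Function.comp_def] using h2 :
        ∃ a b : V, G.Adj a b ∧ symmDiff A.1 B.1 = {a, b})
    · exact adj_image ψ

@[simp] lemma iotaMap_coe (ψ : G ≃g G) (A : {s : Finset V // s.card = k}) :
    (iotaMap (k := k) ψ A).1 = A.1.image ψ := rfl

lemma relIso_mul_apply (f g : tokenGraph G k ≃g tokenGraph G k) (A) :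
    (f * g) A = f (g A) := rfl

/-- `ι` as a monoid hom. -/
def iotaHom : (G ≃g G) →* (tokenGraph G k ≃g tokenGraph G k) where
  toFun := iotaMap
  map_one' := RelIso.ext fun A => Subtype.ext (by simp)
  map_mul' ψ φ := RelIso.ext fun A => Subtype.ext (by
    simp [relIso_mul_apply, Finset.image_image])

end TokenAux

/-- For n ≥ 3, k = n/2: induced automorphisms commute with the
complement automorphism 𝔠, 𝔠² = 1, and the subgroup of Aut(F_k(G)) generated by
ι(Aut(G)) and 𝔠 is isomorphic to Aut(G) × ℤ/2ℤ. -/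
theorem complement_commutes_and_group {V : Type*} [Fintype V] [DecidableEq V]
    (G : SimpleGraph V) (n k : ℕ)
    (hn : Fintype.card V = n) (hn3 : 3 ≤ n) (hk : n = 2 * k) :
    ∃ c : tokenGraph G k ≃g tokenGraph G k,
      (∀ A : {s : Finset V // s.card = k}, (c A).1 = A.1ᶜ) ∧
      ∃ ι : (G ≃g G) →* (tokenGraph G k ≃g tokenGraph G k),
        (∀ (ψ : G ≃g G) (A : {s : Finset V // s.card = k}),
            ((ι ψ) A).1 = A.1.image ψ) ∧
        (∀ ψ : G ≃g G, c * ι ψ = ι ψ * c) ∧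
        (c * c = 1) ∧
        Nonempty
          ((Subgroup.closure (Set.range ι ∪ {c}) : Subgroup (tokenGraph G k ≃g tokenGraph G k))
            ≃* (G ≃g G) × Multiplicative (ZMod 2)) := by
  classical
  have hcard : Fintype.card V = 2 * k := by omega
  have hk2 : 2 ≤ k := by omega
  have hcompl : ∀ s : Finset V, s.card = k → sᶜ.card = k := by
    intro s hs
    rw [Finset.card_compl, hs, hcard]; omega
  -- the complement automorphism
  set c : tokenGraph G k ≃g tokenGraph G k :=
    { toFun := fun A => ⟨A.1ᶜ, hcompl _ A.2⟩
      invFun := fun A => ⟨A.1ᶜ, hcompl _ A.2⟩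
      left_inv := fun A => Subtype.ext (by simp)
      right_inv := fun A => Subtype.ext (by simp)
      map_rel_iff' := by
        intro A B
        show (∃ a b : V, G.Adj a b ∧ symmDiff A.1ᶜ B.1ᶜ = {a, b}) ↔ _
        rw [compl_symmDiff_compl]
        rfl } with hcdef
  have hcA : ∀ A : {s : Finset V // s.card = k}, (c A).1 = A.1ᶜ := fun A => rfl
  have hcomm : ∀ ψ : G ≃g G, c * TokenAux.iotaHom ψ = TokenAux.iotaHom ψ * c := by
    intro ψ
    refine RelIso.ext fun A => Subtype.ext ?_
    show ((TokenAux.iotaMap ψ) A).1ᶜ = (A.1ᶜ).image ψ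
    ext x
    simp only [TokenAux.iotaMap_coe, Finset.mem_compl, Finset.mem_image]
    constructor
    · intro hx
      refine ⟨ψ.symm x, fun h => hx ⟨ψ.symm x, h, by simp⟩, by simp⟩
    · rintro ⟨y, hy, rfl⟩ ⟨z, hz, hzz⟩
      exact hy (by rwa [ψ.injective hzz] at hz)
  have hc2 : c * c = 1 :=
    RelIso.ext fun A => Subtype.ext (by simp [TokenAux.relIso_mul_apply, hcA])
  refine ⟨c, hcA, TokenAux.iotaHom, fun ψ A => rfl, hcomm, hc2, ?_⟩
  -- the group isomorphism
  have hpow : ∀ a b : ZMod 2, c ^ (a + b).val = c ^ a.val * c ^ b.val := by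
    intro a b
    fin_cases a <;> fin_cases b <;>
      simp_all [pow_succ, ZMod.val_one] <;>
      first | rfl | exact (show c ^ 0 = c ^ 1 * c ^ 1 by rw [pow_zero, pow_one, hc2])
  have hcom : ∀ (ψ : G ≃g G) (m : ℕ),
      c ^ m * TokenAux.iotaHom ψ = TokenAux.iotaHom ψ * c ^ m := by
    intro ψ m
    have hC : Commute c (TokenAux.iotaHom ψ) := hcomm ψ
    exact (hC.pow_left m).eq
  set Φ : (G ≃g G) × Multiplicative (ZMod 2) →* (tokenGraph G k ≃g tokenGraph G k) :=
    { toFun := fun p => TokenAux.iotaHom p.1 * c ^ (Multiplicative.toAdd p.2).val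
      map_one' := by simp
      map_mul' := by
        rintro ⟨p1, p2⟩ ⟨q1, q2⟩
        show TokenAux.iotaHom (p1 * q1) * c ^ (Multiplicative.toAdd (p2 * q2)).val =
          (TokenAux.iotaHom p1 * c ^ (Multiplicative.toAdd p2).val) *
            (TokenAux.iotaHom q1 * c ^ (Multiplicative.toAdd q2).val)
        have htoAdd : Multiplicative.toAdd (p2 * q2) =
            Multiplicative.toAdd p2 + Multiplicative.toAdd q2 := rfl
        rw [map_mul, htoAdd, hpow, mul_assoc, ← mul_assoc (TokenAux.iotaHom q1),
          ← hcom q1, mul_assoc (c ^ (Multiplicative.toAdd p2).val), ← mul_assoc] } with hPhidef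
  -- find a k-set avoiding two given vertices
  have hexists : ∀ x y : V, ∃ A : Finset V, A.card = k ∧ x ∉ A ∧ y ∉ A := by
    intro x y
    have hle : k ≤ ((Finset.univ : Finset V) \ {x, y}).card := by
      have h2 : ({x, y} : Finset V).card ≤ 2 := Finset.card_insert_le _ _ |>.trans (by simp)
      have := Finset.card_sdiff_of_subset (Finset.subset_univ ({x, y} : Finset V))
      rw [this, Finset.card_univ, hcard]
      omega
    obtain ⟨t, hts, htc⟩ := Finset.exists_subset_card_eq hle
    refine ⟨t, htc, fun hx => ?_, fun hy => ?_⟩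
    · have := hts hx; simp at this
    · have := hts hy; simp at this
  have hinj : Function.Injective Φ := by
    rw [injective_iff_map_eq_one]
    rintro ⟨ψ, t⟩ h
    have hval : (Multiplicative.toAdd t).val = 0 ∨ (Multiplicative.toAdd t).val = 1 := by
      have := ZMod.val_lt (Multiplicative.toAdd t)
      omega
    rcases hval with hval | hval
    · -- c-part trivial, so ι ψ = 1
      have hψ1 : TokenAux.iotaHom (G := G) (k := k) ψ = 1 := by
        have : Φ (ψ, t) = TokenAux.iotaHom ψ := by
          show TokenAux.iotaHom ψ * c ^ (Multiplicative.toAdd t).val = _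
          rw [hval, pow_zero, mul_one]
        rw [← this, h]
      have hfix : ∀ A : Finset V, A.card = k → A.image ψ = A := by
        intro A hA
        have := congrArg (fun f => ((f : tokenGraph G k ≃g tokenGraph G k) ⟨A, hA⟩).1) hψ1
        simpa [TokenAux.iotaHom] using this
      have hψ : ψ = 1 := by
        refine RelIso.ext fun u => ?_
        by_contra hne
        obtain ⟨A, hAc, hxA, hyA⟩ := hexists u (ψ u)
        have hAcard : (insert u (A.erase (Classical.choose (Finset.card_pos.mp
            (by rw [hAc]; omega : 0 < A.card))))).card = k := by
          rw [Finset.card_insert_of_notMem, Finset.card_erase_of_mem, hAc]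
          · omega
          · exact Classical.choose_spec (Finset.card_pos.mp (by rw [hAc]; omega : 0 < A.card))
          · intro hu; exact hxA (Finset.mem_of_mem_erase hu)
        set B := insert u (A.erase _)
        have hψu : ψ u ∈ B := by
          have := hfix B hAcard
          rw [← this]
          exact Finset.mem_image_of_mem _ (Finset.mem_insert_self u _)
        rcases Finset.mem_insert.mp hψu with h' | h'
        · exact hne h'
        · exact hyA (Finset.mem_of_mem_erase h')
      have ht : t = 1 := by
        have : Multiplicative.toAdd t = 0 := by
          have := (ZMod.val_eq_zero _).mp hval
          exact this
        exact this
      exact Prod.ext hψ ht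
    · -- val = 1 is impossible
      exfalso
      have hAeq : ∀ A : Finset V, A.card = k → (Aᶜ).image ψ = A := by
        intro A hA
        have hΦ : Φ (ψ, t) = TokenAux.iotaHom ψ * c := by
          show TokenAux.iotaHom ψ * c ^ (Multiplicative.toAdd t).val = _
          rw [hval, pow_one]
        have h1 : TokenAux.iotaHom (G := G) (k := k) ψ * c = 1 := by rw [← hΦ, h]
        have := congrArg (fun f => ((f : tokenGraph G k ≃g tokenGraph G k) ⟨A, hA⟩).1) h1
        simpa [TokenAux.iotaHom, TokenAux.relIso_mul_apply, hcA] using this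
      obtain ⟨x⟩ : Nonempty V := Fintype.card_pos_iff.mp (by omega)
      obtain ⟨A, hAc, hxA, hyA⟩ := hexists x (ψ x)
      have : ψ x ∈ A := by
        rw [← hAeq A hAc]
        exact Finset.mem_image_of_mem _ (Finset.mem_compl.mpr hxA)
      exact hyA this
  have hrange : Φ.range =
      Subgroup.closure (Set.range (TokenAux.iotaHom (G := G) (k := k)) ∪ {c}) := by
    apply le_antisymm
    · rintro x ⟨⟨ψ, t⟩, rfl⟩
      have h1 : TokenAux.iotaHom ψ ∈
          Subgroup.closure (Set.range (TokenAux.iotaHom (G := G) (k := k)) ∪ {c}) :=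
        Subgroup.subset_closure (Or.inl ⟨ψ, rfl⟩)
      have h2 : c ∈
          Subgroup.closure (Set.range (TokenAux.iotaHom (G := G) (k := k)) ∪ {c}) :=
        Subgroup.subset_closure (Or.inr rfl)
      exact mul_mem h1 (pow_mem h2 _)
    · rw [Subgroup.closure_le]
      rintro x (⟨ψ, rfl⟩ | hx)
      · refine ⟨(ψ, 1), ?_⟩
        show TokenAux.iotaHom ψ * c ^ (Multiplicative.toAdd (1 : Multiplicative (ZMod 2))).val = _
        simp
      · rw [Set.mem_singleton_iff] at hx
        subst hx
        refine ⟨(1, Multiplicative.ofAdd 1), ?_⟩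
        show TokenAux.iotaHom 1 * c ^ (Multiplicative.toAdd (Multiplicative.ofAdd (1 : ZMod 2))).val = _
        rw [map_one, one_mul]
        simp [ZMod.val_one]
  exact ⟨(MulEquiv.subgroupCongr hrange.symm).trans (MonoidHom.ofInjective hinj).symm⟩
end

section
/- Let G be a graph on n vertices, 1 ≤ k ≤ n−1, and u,v distinct vertices of G. Then u and v are adjacent in G if and only if there exist k-subsets A with u∈A, v∉A and B with v∈B, u∉B such that A and B are adjacent in F_k(G). Equivalently, u is not adjacent to v iff there are no edges of F_k(G) between κ(u,k)∖κ(v,k) and κ(v,k)∖κ(u,k), where κ(w,k) denotes the set of k-subsets of V(G) containing w. -/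
open Finset

/-- adjacency of u,v in G is characterized by the existence of an
edge of F_k(G) between a k-set containing u but not v and one containing v but
not u; equivalently non-adjacency means no such edges exist. -/
theorem adjacency_iff_token_edge {V : Type*} [Fintype V] [DecidableEq V]
    (G : SimpleGraph V) (n k : ℕ)
    (hn : Fintype.card V = n) (hk1 : 1 ≤ k) (hk2 : k ≤ n - 1)
    (u v : V) (huv : u ≠ v) :
    (G.Adj u v ↔
      ∃ A B : {s : Finset V // s.card = k},
        u ∈ A.1 ∧ v ∉ A.1 ∧ v ∈ B.1 ∧ u ∉ B.1 ∧ (tokenGraph G k).Adj A B) ∧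
    (¬ G.Adj u v ↔
      ∀ A B : {s : Finset V // s.card = k},
        u ∈ A.1 ∧ v ∉ A.1 → v ∈ B.1 ∧ u ∉ B.1 →
          ¬ (tokenGraph G k).Adj A B) := by
  have main : G.Adj u v ↔
      ∃ A B : {s : Finset V // s.card = k},
        u ∈ A.1 ∧ v ∉ A.1 ∧ v ∈ B.1 ∧ u ∉ B.1 ∧ (tokenGraph G k).Adj A B := by
    constructor
    · intro hadj
      -- build A : k-set containing u, not v
      have hsub : ({u} : Finset V) ⊆ Finset.univ \ {v} := by
        intro x hx
        simp only [Finset.mem_singleton] at hx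
        subst hx
        simp [huv]
      have hcard : (Finset.univ \ {v} : Finset V).card = n - 1 := by
        rw [Finset.card_sdiff_of_subset (by simp)]
        simp [hn]
      obtain ⟨A, hA1, hA2, hA3⟩ := Finset.exists_subsuperset_card_eq hsub
        (by simpa using hk1) (by rw [hcard]; exact hk2)
      have huA : u ∈ A := hA1 (Finset.mem_singleton_self u)
      have hvA : v ∉ A := fun hv => by have := hA2 hv; simp at this
      set B : Finset V := insert v (A.erase u) with hB
      have hvE : v ∉ A.erase u := fun h => hvA (Finset.mem_of_mem_erase h)
      have hBcard : B.card = k := by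
        rw [hB, Finset.card_insert_of_notMem hvE, Finset.card_erase_of_mem huA, hA3]
        omega
      refine ⟨⟨A, hA3⟩, ⟨B, hBcard⟩, huA, hvA, by simp [hB], ?_, ?_⟩
      · simp only [hB, Finset.mem_insert, Finset.mem_erase]
        push_neg
        exact ⟨huv, fun h => absurd rfl h⟩
      · refine ⟨u, v, hadj, ?_⟩
        ext x
        simp only [Finset.mem_symmDiff, hB, Finset.mem_insert, Finset.mem_erase,
          Finset.mem_singleton]
        constructor
        · rintro (⟨hxA, hx⟩ | ⟨hx, hxA⟩)
          · left
            by_contra hxu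
            exact hx (Or.inr ⟨hxu, hxA⟩)
          · rcases hx with h | ⟨_, h⟩
            · right; exact h
            · exact absurd h hxA
        · rintro (rfl | rfl)
          · exact Or.inl ⟨huA, by push_neg; exact ⟨huv, fun h => absurd rfl h⟩⟩
          · exact Or.inr ⟨Or.inl rfl, hvA⟩
    · rintro ⟨A, B, huA, hvA, hvB, huB, a, b, hab, hsd⟩
      have hu : u ∈ symmDiff A.1 B.1 := by
        rw [Finset.mem_symmDiff]; exact Or.inl ⟨huA, huB⟩
      have hv : v ∈ symmDiff A.1 B.1 := by
        rw [Finset.mem_symmDiff]; exact Or.inr ⟨hvB, hvA⟩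
      rw [hsd] at hu hv
      simp only [Finset.mem_insert, Finset.mem_singleton] at hu hv
      rcases hu with rfl | rfl <;> rcases hv with rfl | rfl
      · exact absurd rfl huv
      · exact hab
      · exact hab.symm
      · exact absurd rfl huv
  refine ⟨main, ?_⟩
  rw [main]
  push_neg
  constructor
  · intro h A B hA hB hadj
    exact (h A B hA.1 hA.2 hB.1 hB.2) hadj
  · intro h A B h1 h2 h3 h4
    exact h A B ⟨h1, h2⟩ ⟨h3, h4⟩
end

section
/- Let F be a graph on C(n,k) vertices with n even and k = n/2, and let 𝓡 be a k-reconstruction family of F. Then the family of complements 𝓡̄ := {V(F) ∖ X : X ∈ 𝓡} is also a k-reconstruction family of F. -/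
open Finset

/-- `S_𝓡(A)`: the members of the family 𝓡 containing the vertex A. -/
def SR {α : Type*} [DecidableEq α] (R : Finset (Finset α)) (A : α) :
    Finset (Finset α) :=
  R.filter (fun X => A ∈ X)


lemma SR_image_compl {α : Type*} [Fintype α] [DecidableEq α]
    (R : Finset (Finset α)) (A : α) :
    SR (R.image (fun X => Xᶜ)) A = (R.filter (fun X => A ∉ X)).image (fun X => Xᶜ) := by
  ext Y
  simp only [SR, Finset.mem_filter, Finset.mem_image]
  constructor
  · rintro ⟨⟨X, hX, rfl⟩, hA⟩
    exact ⟨X, ⟨hX, by simpa using hA⟩, rfl⟩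
  · rintro ⟨X, ⟨hX, hA⟩, rfl⟩
    exact ⟨⟨X, hX, rfl⟩, by simpa⟩

lemma card_image_compl {α : Type*} [Fintype α] [DecidableEq α]
    (S : Finset (Finset α)) : (S.image (fun X => Xᶜ)).card = S.card :=
  Finset.card_image_of_injective _ compl_injective

/-- if n is even, k = n/2 and 𝓡 is a k-reconstruction family of F,
then the family of complements {V(F) ∖ X : X ∈ 𝓡} is also a
k-reconstruction family of F. -/
theorem complement_reconstruction_family
    {α : Type*} [Fintype α] [DecidableEq α]
    (F : SimpleGraph α) (n k : ℕ) (hcard : Fintype.card α = n.choose k)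
    (hk : n = 2 * k)
    (R : Finset (Finset α))
    (h1 : ∀ X ∈ R, X.card = (n - 1).choose (k - 1))
    (h2 : ∀ A : α, (SR R A).card = k)
    (h3 : ∀ A B : α, F.Adj A B → ((SR R A) ∩ (SR R B)).card = k - 1) :
    (∀ X ∈ R.image (fun X => Xᶜ), X.card = (n - 1).choose (k - 1)) ∧
    (∀ A : α, (SR (R.image (fun X => Xᶜ)) A).card = k) ∧
    (∀ A B : α, F.Adj A B →
      ((SR (R.image (fun X => Xᶜ)) A) ∩ (SR (R.image (fun X => Xᶜ)) B)).card
        = k - 1) := by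

  rcases Nat.eq_zero_or_pos k with hk0 | hkpos
  · -- degenerate case k = 0
    subst hk0
    have hn : n = 0 := by omega
    subst hn
    have hcard1 : Fintype.card α = 1 := by simpa using hcard
    have hR : R = ∅ := by
      by_contra h
      obtain ⟨X, hX⟩ := Finset.nonempty_iff_ne_empty.mpr h
      have hXc : X.card = 1 := by simpa using h1 X hX
      have hXuniv : X = Finset.univ := Finset.eq_univ_of_card X (by omega)
      have : Nonempty α := Fintype.card_pos_iff.mp (by omega)
      obtain ⟨A⟩ := this
      have hmem : X ∈ SR R A :=
        Finset.mem_filter.mpr ⟨hX, hXuniv ▸ Finset.mem_univ A⟩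
      have := h2 A
      rw [Finset.card_eq_zero] at this
      simp [this] at hmem
    subst hR
    refine ⟨by simp, by simp [SR], by simp [SR]⟩
  · -- main case k ≥ 1
    set m := (n - 1).choose (k - 1) with hm
    have hmpos : 0 < m := Nat.choose_pos (by omega)
    have hNm : n.choose k = 2 * m := by
      have h1' : n = (n - 1) + 1 := by omega
      have h2' : k = (k - 1) + 1 := by omega
      have hsymm : (n - 1).choose k = (n - 1).choose (k - 1) := by
        have : (n - 1) - k = k - 1 := by omega
        rw [← this, Nat.choose_symm (by omega)]
      calc n.choose k = ((n-1)+1).choose ((k-1)+1) := by rw [← h1', ← h2']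
        _ = (n-1).choose (k-1) + (n-1).choose ((k-1)+1) := Nat.choose_succ_succ _ _
        _ = m + (n-1).choose k := by rw [← h2', hm]
        _ = 2 * m := by rw [hsymm, ← hm]; ring
    have hcardα : Fintype.card α = 2 * m := by rw [hcard, hNm]
    -- double counting: R.card = 2 * k
    have hsum : ∑ A : α, (SR R A).card = ∑ X ∈ R, X.card := by
      have : ∀ A : α, (SR R A).card = ∑ X ∈ R, (if A ∈ X then 1 else 0) := by
        intro A; rw [SR, Finset.card_filter]
      simp_rw [this]
      rw [Finset.sum_comm]
      congr 1
      ext X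
      rw [← Finset.card_filter]
      congr 1
      exact Finset.filter_univ_mem X
    have hRcard : R.card = 2 * k := by
      have hL : ∑ A : α, (SR R A).card = 2 * m * k := by
        simp [h2, hcardα, mul_comm]
      have hRr : ∑ X ∈ R, X.card = R.card * m := by
        rw [Finset.sum_congr rfl h1, Finset.sum_const, smul_eq_mul]
      have : R.card * m = 2 * k * m := by
        rw [← hRr, ← hsum, hL]; ring
      exact Nat.eq_of_mul_eq_mul_right hmpos this
    refine ⟨?_, ?_, ?_⟩
    · rintro Y hY
      rw [Finset.mem_image] at hY
      obtain ⟨X, hX, rfl⟩ := hY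
      rw [Finset.card_compl, hcardα, h1 X hX]
      omega
    · intro A
      rw [SR_image_compl, card_image_compl]
      have hsplit := Finset.card_filter_add_card_filter_not
        (s := R) (p := fun X => A ∈ X)
      have hA : (R.filter (fun X => A ∈ X)).card = k := h2 A
      have : (R.filter (fun X => A ∈ X)).card
          + (R.filter (fun X => ¬ A ∈ X)).card = R.card := hsplit
      omega
    · intro A B hAB
      have hinter : (SR (R.image (fun X => Xᶜ)) A) ∩ (SR (R.image (fun X => Xᶜ)) B)
          = (R.filter (fun X => A ∉ X ∧ B ∉ X)).image (fun X => Xᶜ) := by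
        rw [SR_image_compl, SR_image_compl,
          ← Finset.image_inter _ _ compl_injective]
        congr 1
        ext X
        simp only [Finset.mem_inter, Finset.mem_filter]
        tauto
      rw [hinter, card_image_compl]
      have hunion : ((SR R A) ∪ (SR R B)).card + ((SR R A) ∩ (SR R B)).card
          = (SR R A).card + (SR R B).card := Finset.card_union_add_card_inter _ _
      rw [h2, h2, h3 A B hAB] at hunion
      have huc : ((SR R A) ∪ (SR R B)).card = k + 1 := by omega
      have heq : R.filter (fun X => A ∉ X ∧ B ∉ X) = R \ ((SR R A) ∪ (SR R B)) := by
        ext X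
        simp only [Finset.mem_filter, Finset.mem_sdiff, Finset.mem_union, SR]
        tauto
      rw [heq, Finset.card_sdiff_of_subset (by
        intro X hX
        rcases Finset.mem_union.mp hX with h | h
        · exact (Finset.mem_filter.mp h).1
        · exact (Finset.mem_filter.mp h).1)]
      rw [huc, hRcard]
      omega
end

section
/- Every induced 4-cycle (A,B,C,D) of a k-token graph F_k(G) with G a (C4, diamond)-free graph is generated by moving two tokens along two disjoint edges of G: there exist disjoint edges a₁b₁ and a₂b₂ of G and a (k−2)-subset S of V(G) disjoint from {a₁,b₁,a₂,b₂} such that {A,B,C,D} = {S∪{a₁,a₂}, S∪{b₁,a₂}, S∪{b₁,b₂}, S∪{a₁,b₂}} (up to rotation/reflection of the cycle). -/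
open Finset

/-- `G` contains an induced 4-cycle. -/
def HasInducedC4 {V : Type*} (G : SimpleGraph V) : Prop :=
  ∃ a b c d : V, a ≠ b ∧ a ≠ c ∧ a ≠ d ∧ b ≠ c ∧ b ≠ d ∧ c ≠ d ∧
    G.Adj a b ∧ G.Adj b c ∧ G.Adj c d ∧ G.Adj d a ∧ ¬G.Adj a c ∧ ¬G.Adj b d

/-- `G` contains an induced diamond (K₄ minus an edge). -/
def HasInducedDiamond {V : Type*} (G : SimpleGraph V) : Prop :=
  ∃ a b c d : V, a ≠ b ∧ a ≠ c ∧ a ≠ d ∧ b ≠ c ∧ b ≠ d ∧ c ≠ d ∧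
    G.Adj a b ∧ G.Adj a c ∧ G.Adj a d ∧ G.Adj b c ∧ G.Adj c d ∧ ¬G.Adj b d

/-- A graph is (C4,diamond)-free if it has no induced 4-cycle and no induced
diamond. -/
def C4DiamondFree {V : Type*} (G : SimpleGraph V) : Prop :=
  ¬HasInducedC4 G ∧ ¬HasInducedDiamond G

section Aux
variable {V : Type*} [DecidableEq V] {G : SimpleGraph V} {k : ℕ}

lemma flip_mem {A D : Finset V} {g h : V} (hgD : g ∈ D) (hgA : g ∉ A)
    (hhA : h ∈ A) (hhD : h ∉ D) (H : ∀ v, v ∈ A ↔ (v ∈ D ∧ v ≠ g) ∨ v = h) :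
    ∀ v, v ∈ D ↔ (v ∈ A ∧ v ≠ h) ∨ v = g := by
  intro v
  have hv := H v
  rcases eq_or_ne v g with rfl | h1 <;> rcases eq_or_ne v h with rfl | h2 <;> tauto

lemma sd_pair {A C : Finset V} {u v : V} (h1 : u ∈ A) (h2 : u ∉ C) (h3 : v ∈ C)
    (h4 : v ∉ A) (h : ∀ w, w ≠ u → w ≠ v → (w ∈ A ↔ w ∈ C)) :
    symmDiff A C = {u, v} := by
  ext w
  rw [Finset.mem_symmDiff]
  simp only [Finset.mem_insert, Finset.mem_singleton]
  rcases eq_or_ne w u with rfl | e1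
  · simp [h1, h2]
  rcases eq_or_ne w v with rfl | e2
  · simp [h3, h4]
  have := h w e1 e2
  simp [e1, e2]
  tauto

lemma tg_adj {A B : {s : Finset V // s.card = k}} (h : (tokenGraph G k).Adj A B) :
    ∃ a b : V, G.Adj a b ∧ a ∈ A.1 ∧ a ∉ B.1 ∧ b ∈ B.1 ∧ b ∉ A.1 ∧
      ∀ v, v ∈ B.1 ↔ (v ∈ A.1 ∧ v ≠ a) ∨ v = b := by
  obtain ⟨x, y, hxy, hs⟩ := h
  have hxyne : x ≠ y := hxy.ne
  have hmem : ∀ v, (v ∈ A.1 ∧ v ∉ B.1) ∨ (v ∈ B.1 ∧ v ∉ A.1) ↔ v = x ∨ v = y := by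
    intro v
    rw [← Finset.mem_symmDiff, hs]
    simp
  have hcard : A.1.card = B.1.card := A.2.trans B.2.symm
  have final : ∀ p q : V, p ≠ q → G.Adj p q →
      (∀ v, (v ∈ A.1 ∧ v ∉ B.1) ∨ (v ∈ B.1 ∧ v ∉ A.1) ↔ v = p ∨ v = q) →
      (p ∈ A.1 ∧ p ∉ B.1) → (q ∈ B.1 ∧ q ∉ A.1) →
      ∃ a b : V, G.Adj a b ∧ a ∈ A.1 ∧ a ∉ B.1 ∧ b ∈ B.1 ∧ b ∉ A.1 ∧
        ∀ v, v ∈ B.1 ↔ (v ∈ A.1 ∧ v ≠ a) ∨ v = b := by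
    intro p q hpq hadj hm hp hq
    refine ⟨p, q, hadj, hp.1, hp.2, hq.1, hq.2, fun v => ?_⟩
    have hv := hm v
    rcases eq_or_ne v p with rfl | h1 <;> rcases eq_or_ne v q with rfl | h2 <;> tauto
  have hmx := (hmem x).2 (Or.inl rfl)
  have hmy := (hmem y).2 (Or.inr rfl)
  rcases hmx with hx | hx <;> rcases hmy with hy | hy
  · exfalso
    have hsub : B.1 ⊆ A.1 := by
      intro v hv
      by_contra hvA
      rcases (hmem v).1 (Or.inr ⟨hv, hvA⟩) with rfl | rfl
      · exact hvA hx.1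
      · exact hvA hy.1
    have : B.1 = A.1 := Finset.eq_of_subset_of_card_le hsub hcard.le
    exact hx.2 (this ▸ hx.1)
  · exact final x y hxyne hxy hmem hx hy
  · exact final y x hxyne.symm hxy.symm (fun v => by rw [hmem v]; tauto) hy hx
  · exfalso
    have hsub : A.1 ⊆ B.1 := by
      intro v hv
      by_contra hvB
      rcases (hmem v).1 (Or.inl ⟨hv, hvB⟩) with rfl | rfl
      · exact hvB hx.1
      · exact hvB hy.1
    have : A.1 = B.1 := Finset.eq_of_subset_of_card_le hsub hcard.ge
    exact hx.2 (this ▸ hx.1)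

end Aux

set_option maxHeartbeats 8000000 in
/-- every induced 4-cycle of the k-token graph of a
(C4,diamond)-free graph G comes from moving two tokens along two disjoint edges
of G. -/
theorem induced_four_cycle_structure {V : Type*} [Fintype V] [DecidableEq V]
    (G : SimpleGraph V) (hG : C4DiamondFree G) (n k : ℕ)
    (hn : Fintype.card V = n) (hk1 : 1 ≤ k) (hk2 : k ≤ n - 1)
    (A B C D : {s : Finset V // s.card = k})
    (hAB : (tokenGraph G k).Adj A B) (hBC : (tokenGraph G k).Adj B C)
    (hCD : (tokenGraph G k).Adj C D) (hDA : (tokenGraph G k).Adj D A)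
    (hAC : ¬(tokenGraph G k).Adj A C) (hBD : ¬(tokenGraph G k).Adj B D)
    (hne : A ≠ C ∧ B ≠ D) :
    ∃ a₁ b₁ a₂ b₂ : V, G.Adj a₁ b₁ ∧ G.Adj a₂ b₂ ∧
      a₁ ≠ a₂ ∧ a₁ ≠ b₂ ∧ b₁ ≠ a₂ ∧ b₁ ≠ b₂ ∧
      ∃ S : Finset V, S.card = k - 2 ∧
        a₁ ∉ S ∧ b₁ ∉ S ∧ a₂ ∉ S ∧ b₂ ∉ S ∧
        ({A.1, B.1, C.1, D.1} : Set (Finset V)) =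
          {S ∪ {a₁, a₂}, S ∪ {b₁, a₂}, S ∪ {b₁, b₂}, S ∪ {a₁, b₂}} := by
  obtain ⟨a, b, hab, haA, haB, hbB, hbA, mB⟩ := tg_adj hAB
  obtain ⟨c, d, hcd, hcB, hcC, hdC, hdB, mC⟩ := tg_adj hBC
  obtain ⟨e, f, hef, heC, heD, hfD, hfC, mD0⟩ := tg_adj hCD
  obtain ⟨g, h, hgh, hgD, hgA, hhA, hhD, mA⟩ := tg_adj hDA
  have mD2 := flip_mem hgD hgA hhA hhD mA
  have nAC : ∀ u v : V, symmDiff A.1 C.1 = {u, v} → ¬G.Adj u v :=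
    fun u v hs hadj => hAC ⟨u, v, hadj, hs⟩
  have nBD : ∀ u v : V, symmDiff B.1 D.1 = {u, v} → ¬G.Adj u v :=
    fun u v hs hadj => hBD ⟨u, v, hadj, hs⟩
  have hab' : a ≠ b := hab.ne
  have hba' : b ≠ a := hab.ne.symm
  have hcd' : c ≠ d := hcd.ne
  have hdc' : d ≠ c := hcd.ne.symm
  have hef' : e ≠ f := hef.ne
  have hfe' : f ≠ e := hef.ne.symm
  have hgh' : g ≠ h := hgh.ne
  have hhg' : h ≠ g := hgh.ne.symm
  by_cases hcb : c = b
  · -- CASE II : c = b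
    obtain rfl := hcb.symm
    exfalso
    have hda : d ≠ a := by
      intro hh
      have hh2 := hh.symm
      refine hne.1 (Subtype.ext (Finset.ext fun v => ?_))
      have h1 := mB v
      have h2 := mC v
      clear * - h1 h2 hh hh2 haA haB hbA hbB hdB hdC hab' hba' hcd' hdc'
      rcases eq_or_ne v a with rfl | e1 <;> rcases eq_or_ne v b with rfl | e2 <;>
        rcases eq_or_ne v d with rfl | e3 <;> tauto
    have hdA : d ∉ A.1 := by
      intro hh
      exact hdB ((mB d).2 (Or.inl ⟨hh, hda⟩))
    have had : a ≠ d := fun hh => hda hh.symm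
    have haC : a ∉ C.1 := by
      intro hh
      rcases (mC a).1 hh with ⟨h1, _⟩ | h1
      · exact haB h1
      · exact had h1
    have mC2 : ∀ v, v ∈ C.1 ↔ (v ∈ A.1 ∧ v ≠ a) ∨ v = d := by
      intro v
      have h1 := mB v
      have h2 := mC v
      clear * - h1 h2 haA haB hbA hbB hdC hdB hda had hcd' hdc' hab' hba' haC
      rcases eq_or_ne v a with rfl | e1 <;> rcases eq_or_ne v b with rfl | e2 <;>
        rcases eq_or_ne v d with rfl | e3 <;> tauto
    have hnad : ¬G.Adj a d := by
      refine nAC a d (sd_pair haA haC hdC hdA ?_)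
      intro w w1 w2
      have h2 := mC2 w
      clear * - h2 w1 w2
      tauto
    have hfd : f ≠ d := by
      intro hh
      exact hfC ((mC2 f).2 (Or.inr hh))
    by_cases hfa : f = a
    · -- f = a
      obtain rfl := hfa.symm
      rcases (mC2 e).1 heC with ⟨heA, hea⟩ | he
      · -- e ∈ A ∩ C
        have heh : e = h := by
          rcases (mA e).1 heA with ⟨h1, _⟩ | h1
          · exact absurd h1 heD
          · exact h1
        have hed : e ≠ d := fun hh => hdA (hh ▸ heA)
        have hde : d ≠ e := fun hh => hed hh.symm
        have hdD : d ∈ D.1 := (mD0 d).2 (Or.inl ⟨hdC, hde⟩)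
        have hdg : d = g := by
          rcases (mD2 d).1 hdD with ⟨h1, _⟩ | h1
          · exact absurd h1 hdA
          · exact h1
        have hde2 : G.Adj d e := by rw [hdg, heh]; exact hgh
        have heb : e ≠ b := fun hh => hcC (hh ▸ heC)
        have hbe : b ≠ e := fun hh => heb hh.symm
        have hae : a ≠ e := fun hh => heD (hh ▸ hfD)
        by_cases hGbe : G.Adj b e
        · exact hG.2 ⟨b, a, e, d, hba', hbe, hcd', hae, had, hed, hab.symm, hGbe,
            hcd, hef.symm, hde2.symm, hnad⟩
        · exact hG.1 ⟨a, b, d, e, hab', had, hae, hcd', hbe, hde, hab, hcd, hde2,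
            hef, hnad, hGbe⟩
      · -- e = d : A = D, contradiction
        obtain rfl := he.symm
        have hAD : ∀ v, v ∈ D.1 ↔ v ∈ A.1 := by
          intro v
          have h1 := mD0 v
          have h2 := mC2 v
          clear * - h1 h2 haA hdA hda had hdC haC
          rcases eq_or_ne v a with rfl | e1 <;> rcases eq_or_ne v d with rfl | e2 <;> tauto
        exact hgA ((hAD g).1 hgD)
    · -- f ∉ A
      have hfA : f ∉ A.1 := by
        intro hh
        exact hfC ((mC2 f).2 (Or.inl ⟨hh, hfa⟩))
      have hfg : f = g := by
        rcases (mD2 f).1 hfD with ⟨h1, _⟩ | h1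
        · exact absurd h1 hfA
        · exact h1
      have hed : e = d := by
        by_contra hed
        have hde : d ≠ e := fun hh => hed hh.symm
        have hdD : d ∈ D.1 := (mD0 d).2 (Or.inl ⟨hdC, hde⟩)
        have hdg : d = g := by
          rcases (mD2 d).1 hdD with ⟨h1, _⟩ | h1
          · exact absurd h1 hdA
          · exact h1
        exact hfd (hfg.trans hdg.symm)
      obtain rfl := hed.symm
      have mD3 : ∀ v, v ∈ D.1 ↔ (v ∈ A.1 ∧ v ≠ a) ∨ v = f := by
        intro v
        have h1 := mD0 v
        have h2 := mC2 v
        clear * - h1 h2 hdA hda had hdC haC hfd hfa hfA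
        rcases eq_or_ne v d with rfl | e1 <;> rcases eq_or_ne v f with rfl | e2 <;> tauto
      have hbf : b ≠ f := by
        intro hh
        refine hne.2 (Subtype.ext (Finset.ext fun v => ?_))
        have h1 := mB v
        have h2 := mD3 v
        rw [← hh] at h2
        clear * - h1 h2
        tauto
      have hfb : f ≠ b := fun hh => hbf hh.symm
      have haD : a ∉ D.1 := by
        intro hh
        rcases (mD3 a).1 hh with ⟨h1, h2⟩ | h1
        · exact h2 rfl
        · exact hfa h1.symm
      have hah : a = h := by
        rcases (mA a).1 haA with ⟨h1, _⟩ | h1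
        · exact absurd h1 haD
        · exact h1
      have hfa2 : G.Adj f a := by rw [hfg, hah]; exact hgh
      have hbD : b ∉ D.1 := by
        intro hh
        rcases (mD3 b).1 hh with ⟨h1, _⟩ | h1
        · exact hbA h1
        · exact hbf h1
      have hfB : f ∉ B.1 := by
        intro hh
        rcases (mB f).1 hh with ⟨h1, _⟩ | h1
        · exact hfA h1
        · exact hfb h1
      have hfDD : f ∈ D.1 := (mD3 f).2 (Or.inr rfl)
      have hnbf : ¬G.Adj b f := by
        refine nBD b f (sd_pair hbB hbD hfDD hfB ?_)
        intro w w1 w2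
        have h1 := mB w
        have h2 := mD3 w
        clear * - h1 h2 w1 w2
        tauto
      have haf : a ≠ f := fun hh => hfA (hh ▸ haA)
      exact hG.1 ⟨a, b, d, f, hab', had, haf, hcd', hbf, hef.ne, hab, hcd, hef,
        hfa2, hnad, hnbf⟩
  by_cases hda : d = a
  · -- CASE III : d = a
    obtain rfl := hda.symm
    exfalso
    have hcA : c ∈ A.1 := by
      rcases (mB c).1 hcB with ⟨h1, _⟩ | h1
      · exact h1
      · exact absurd h1 hcb
    have hbc : b ≠ c := fun hh => hcb hh.symm
    have mC3 : ∀ v, v ∈ C.1 ↔ (v ∈ A.1 ∧ v ≠ c) ∨ v = b := by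
      intro v
      have h1 := mB v
      have h2 := mC v
      clear * - h1 h2 haA haB hbA hbB hcB hcC hcA hcb hbc hab' hba' hcd' hdc'
      rcases eq_or_ne v a with rfl | e1 <;> rcases eq_or_ne v b with rfl | e2 <;>
        rcases eq_or_ne v c with rfl | e3 <;> tauto
    have hbC : b ∈ C.1 := (mC3 b).2 (Or.inr rfl)
    have hnc_b : ¬G.Adj c b := by
      refine nAC c b (sd_pair hcA hcC hbC hbA ?_)
      intro w w1 w2
      have h2 := mC3 w
      clear * - h2 w1 w2
      tauto
    have hfb : f ≠ b := by
      intro hh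
      exact hfC ((mC3 f).2 (Or.inr hh))
    by_cases hfc : f = c
    · -- f = c
      obtain rfl := hfc.symm
      rcases (mC3 e).1 heC with ⟨heA, hec⟩ | he
      · by_cases hea : e = a
        · -- B = D : contradiction
          obtain rfl := hea.symm
          refine hne.2 (Subtype.ext (Finset.ext fun v => ?_))
          have h1 := mB v
          have h2 := mD0 v
          have h3 := mC3 v
          clear * - h1 h2 h3 haA haB hbA hbB hcB hcC hcA hcb hbc hab' hba' hcd' hdc' hbC
          rcases eq_or_ne v a with rfl | e1 <;> rcases eq_or_ne v b with rfl | e2 <;>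
            rcases eq_or_ne v c with rfl | e3 <;> tauto
        · have heh : e = h := by
            rcases (mA e).1 heA with ⟨h1, _⟩ | h1
            · exact absurd h1 heD
            · exact h1
          have hbe : b ≠ e := fun hh => hbA (hh ▸ heA)
          have hbD : b ∈ D.1 := (mD0 b).2 (Or.inl ⟨hbC, hbe⟩)
          have hbg : b = g := by
            rcases (mD2 b).1 hbD with ⟨h1, _⟩ | h1
            · exact absurd h1 hbA
            · exact h1
          have hbe2 : G.Adj b e := by rw [hbg, heh]; exact hgh
          have heB : e ∈ B.1 := (mB e).2 (Or.inl ⟨heA, hea⟩)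
          have hae : a ≠ e := fun hh => hea hh.symm
          have haD : a ∈ D.1 := (mD0 a).2 (Or.inl ⟨hdC, hae⟩)
          have hnea : ¬G.Adj e a := by
            refine nBD e a (sd_pair heB heD haD haB ?_)
            intro w w1 w2
            have h1 := mB w
            have h2 := mD0 w
            have h3 := mC3 w
            clear * - h1 h2 h3 w1 w2 haA haB hbA hbB hcB hcC hcA hcb hbc hab' hba' hcd' hdc' hbC hfD hbD
            rcases eq_or_ne w b with rfl | e2 <;> rcases eq_or_ne w c with rfl | e3 <;> tauto
          have hce : c ≠ e := fun hh => hcC (hh ▸ heC)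
          exact hG.1 ⟨c, a, b, e, hcd', hcb, hce, hab', hae, hbe, hcd, hab, hbe2,
            hef, hnc_b, fun hh => hnea hh.symm⟩
      · -- e = b : D = A, contradiction
        obtain rfl := he.symm
        have hAD : ∀ v, v ∈ D.1 ↔ v ∈ A.1 := by
          intro v
          have h1 := mD0 v
          have h2 := mC3 v
          clear * - h1 h2 hcA hbA hbC hcC hbc hcb
          rcases eq_or_ne v b with rfl | e1 <;> rcases eq_or_ne v c with rfl | e2 <;> tauto
        exact hgA ((hAD g).1 hgD)
    · -- f ∉ A
      have hfA : f ∉ A.1 := fun hh => hfC ((mC3 f).2 (Or.inl ⟨hh, hfc⟩))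
      have hfg : f = g := by
        rcases (mD2 f).1 hfD with ⟨h1, _⟩ | h1
        · exact absurd h1 hfA
        · exact h1
      have hcD : c ∉ D.1 := by
        intro hh
        rcases (mD0 c).1 hh with ⟨h1, _⟩ | h1
        · exact hcC h1
        · exact hfc h1.symm
      have hch : c = h := by
        rcases (mA c).1 hcA with ⟨h1, _⟩ | h1
        · exact absurd h1 hcD
        · exact h1
      have heb : e = b := by
        by_contra heb
        have hbe : b ≠ e := fun hh => heb hh.symm
        have hbD : b ∈ D.1 := (mD0 b).2 (Or.inl ⟨hbC, hbe⟩)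
        have hbg : b = g := by
          rcases (mD2 b).1 hbD with ⟨h1, _⟩ | h1
          · exact absurd h1 hbA
          · exact h1
        exact hfb (hfg.trans hbg.symm)
      obtain rfl := heb.symm
      have hbf : b ≠ f := fun hh => hfb hh.symm
      have mD4 : ∀ v, v ∈ D.1 ↔ (v ∈ A.1 ∧ v ≠ c) ∨ v = f := by
        intro v
        have h1 := mD0 v
        have h2 := mC3 v
        clear * - h1 h2 hbA hbC hfb hbf hfA hfC hcC hcA
        rcases eq_or_ne v b with rfl | e1 <;> rcases eq_or_ne v f with rfl | e2 <;> tauto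
      have hfc2 : G.Adj f c := by rw [hfg, hch]; exact hgh
      by_cases hGaf : G.Adj a f
      · exact hG.2 ⟨a, b, f, c, hab', hGaf.ne, hdc', hbf, hbc, fun hh => hfc hh,
          hab, hGaf, hcd.symm, hef, hfc2, fun hh => hnc_b hh.symm⟩
      · exact hG.1 ⟨c, a, b, f, hcd', hcb, fun hh => hfc hh.symm, hab',
          fun hh => hfA (hh ▸ haA), hbf, hcd, hab, hef, hfc2, hnc_b, hGaf⟩
  -- CASE I : the two swaps are disjoint
  have hbc : b ≠ c := fun hh => hcb hh.symm
  have had : a ≠ d := fun hh => hda hh.symm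
  have hcA : c ∈ A.1 ∧ c ≠ a := by have := (mB c).1 hcB; tauto
  have hca : c ≠ a := hcA.2
  have hac : a ≠ c := fun hh => hca hh.symm
  have hdA : d ∉ A.1 := by
    intro hh
    have := (mB d).2 (Or.inl ⟨hh, hda⟩)
    exact hdB this
  have hdb : d ≠ b := by
    intro hh
    exact hdB (hh ▸ hbB)
  have hbd : b ≠ d := fun hh => hdb hh.symm
  have hbC : b ∈ C.1 := (mC b).2 (Or.inl ⟨hbB, hbc⟩)
  have haC : a ∉ C.1 := by
    intro hh
    rcases (mC a).1 hh with ⟨h1, _⟩ | h1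
    · exact haB h1
    · exact had h1
  have mC' : ∀ v, v ∈ C.1 ↔ (v ∈ A.1 ∧ v ≠ a ∧ v ≠ c) ∨ v = b ∨ v = d := by
    intro v
    have h1 := mB v
    have h2 := mC v
    clear * - h1 h2 haA haB hbA hbB hcB hcC hdC hdB hca hda hdb hcb hab' hba' hcd' hdc' hbc had hac hbd hbC haC
    rcases eq_or_ne v a with rfl | e1 <;> rcases eq_or_ne v b with rfl | e2 <;>
      rcases eq_or_ne v c with rfl | e3 <;> rcases eq_or_ne v d with rfl | e4 <;> tauto
  -- analyze f
  have hfs : f ≠ b ∧ f ≠ d ∧ (f ∉ A.1 ∨ f = a ∨ f = c) := by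
    have := mC' f
    constructor
    · intro hh; exact hfC ((mC' f).2 (Or.inr (Or.inl hh)))
    constructor
    · intro hh; exact hfC ((mC' f).2 (Or.inr (Or.inr hh)))
    · by_contra hh
      push_neg at hh
      exact hfC ((mC' f).2 (Or.inl ⟨hh.1, fun h1 => hh.2.1 h1, fun h1 => hh.2.2 h1⟩))
  by_cases hfa : f = a
  · -- f = a
    obtain rfl := hfa.symm
    have hcD : c ∉ D.1 := by
      intro hh
      rcases (mD0 c).1 hh with ⟨h1, _⟩ | h1
      · exact hcC h1
      · exact hca h1
    have hch : c = h := by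
      rcases (mA c).1 hcA.1 with ⟨h1, _⟩ | h1
      · exact absurd h1 hcD
      · exact h1
    rcases (mC' e).1 heC with ⟨heA, hea, hec⟩ | he | he
    · -- e in A ∩ C : impossible
      exfalso
      rcases (mA e).1 heA with ⟨h1, _⟩ | h1
      · exact heD h1
      · exact hec (h1.trans hch.symm)
    · -- e = b : THE GOOD CASE
      obtain rfl := he.symm
      have mD' : ∀ v, v ∈ D.1 ↔ (v ∈ A.1 ∧ v ≠ a ∧ v ≠ c) ∨ v = a ∨ v = d := by
        intro v
        have h1 := mD0 v
        have h2 := mC' v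
        clear * - h1 h2 haA haB hbA hbB hcB hcC hdC hdB hca hda hdb hcb hab' hba' hcd' hdc' hbc had hac hbd hbC haC hcD hch hdA hcA
        rcases eq_or_ne v a with rfl | e1 <;> rcases eq_or_ne v b with rfl | e2 <;>
          rcases eq_or_ne v c with rfl | e3 <;> rcases eq_or_ne v d with rfl | e4 <;> tauto
      refine ⟨a, b, c, d, hab, hcd, hac, had, hbc, hbd,
        (A.1.erase a).erase c, ?_, ?_, ?_, ?_, ?_, ?_⟩
      · rw [Finset.card_erase_of_mem (Finset.mem_erase.2 ⟨hca, hcA.1⟩),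
          Finset.card_erase_of_mem haA, A.2]
        omega
      · intro hs
        exact (Finset.mem_erase.1 (Finset.mem_of_mem_erase hs)).1 rfl
      · intro hs
        exact hbA (Finset.mem_of_mem_erase (Finset.mem_of_mem_erase hs))
      · exact Finset.notMem_erase _ _
      · intro hs
        exact hdA (Finset.mem_of_mem_erase (Finset.mem_of_mem_erase hs))
      · have hAeq : A.1 = (A.1.erase a).erase c ∪ {a, c} := by
          ext v
          simp only [Finset.mem_union, Finset.mem_erase, Finset.mem_insert,
            Finset.mem_singleton]
          clear * - haA hcA hca hac
          rcases eq_or_ne v a with rfl | e1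
          · tauto
          rcases eq_or_ne v c with rfl | e2
          · tauto
          tauto
        have hBeq : B.1 = (A.1.erase a).erase c ∪ {b, c} := by
          ext v
          have h1 := mB v
          simp only [Finset.mem_union, Finset.mem_erase, Finset.mem_insert,
            Finset.mem_singleton]
          clear * - h1 haA hcA hbA hca hac hcB hbB hab' hba' hbc hcb
          rcases eq_or_ne v a with rfl | e1
          · tauto
          rcases eq_or_ne v b with rfl | e2
          · tauto
          rcases eq_or_ne v c with rfl | e3
          · tauto
          tauto
        have hCeq : C.1 = (A.1.erase a).erase c ∪ {b, d} := by
          ext v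
          have h1 := mC' v
          simp only [Finset.mem_union, Finset.mem_erase, Finset.mem_insert,
            Finset.mem_singleton]
          clear * - h1
          tauto
        have hDeq : D.1 = (A.1.erase a).erase c ∪ {a, d} := by
          ext v
          have h1 := mD' v
          simp only [Finset.mem_union, Finset.mem_erase, Finset.mem_insert,
            Finset.mem_singleton]
          clear * - h1
          tauto
        rw [← hAeq, ← hBeq, ← hCeq, ← hDeq]
    · -- e = d : contradiction via C4/diamond
      obtain rfl := he.symm
      exfalso
      have mD'' : ∀ v, v ∈ D.1 ↔ (v ∈ A.1 ∧ v ≠ a ∧ v ≠ c) ∨ v = b ∨ v = a := by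
        intro v
        have h1 := mD0 v
        have h2 := mC' v
        clear * - h1 h2 haA haB hbA hbB hcB hcC hdC hdB hca hac had hda hdb hbd hbc hcb hab' hba' hcd' hdc' hbC haC hcA hdA
        rcases eq_or_ne v a with rfl | e1 <;> rcases eq_or_ne v b with rfl | e2 <;>
          rcases eq_or_ne v c with rfl | e3 <;> rcases eq_or_ne v d with rfl | e4 <;> tauto
      have hbD : b ∈ D.1 := (mD'' b).2 (Or.inr (Or.inl rfl))
      have hbg : b = g := by
        rcases (mD2 b).1 hbD with ⟨h1, _⟩ | h1
        · exact absurd h1 hbA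
        · exact h1
      have hbc2 : G.Adj b c := by rw [hbg, hch]; exact hgh
      have haD : a ∈ D.1 := (mD'' a).2 (Or.inr (Or.inr rfl))
      have hnca : ¬G.Adj c a := by
        refine nBD c a (sd_pair hcB hcD haD haB ?_)
        intro w w1 w2
        have h1 := mB w
        have h2 := mD'' w
        clear * - h1 h2 w1 w2 haA haB hbA hbB hcB hcC hdC hdB hca hac had hda hdb hbd hbc hcb hab' hba' hcd' hdc' hbC haC hcA hdA hbD hbB
        rcases eq_or_ne w b with rfl | e1 <;> tauto
      by_cases hGbd : G.Adj b d
      · exact hG.2 ⟨b, a, d, c, hba', hbd, hbc, had, hac, hdc', hab.symm, hGbd, hbc2,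
          hef.symm, hcd.symm, fun hh => hnca hh.symm⟩
      · exact hG.1 ⟨a, b, c, d, hab', hac, had, hbc, hbd, hcd', hab, hbc2, hcd, hef,
          fun hh => hnca hh.symm, hGbd⟩
  by_cases hfc : f = c
  · -- f = c
    obtain rfl := hfc.symm
    exfalso
    have haD : a ∉ D.1 := by
      intro hh
      rcases (mD0 a).1 hh with ⟨h1, _⟩ | h1
      · exact haC h1
      · exact hac h1
    have hah : a = h := by
      rcases (mA a).1 haA with ⟨h1, _⟩ | h1
      · exact absurd h1 haD
      · exact h1
    rcases (mC' e).1 heC with ⟨heA, hea, hec⟩ | he | he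
    · rcases (mA e).1 heA with ⟨h1, _⟩ | h1
      · exact heD h1
      · exact hea (h1.trans hah.symm)
    · -- e = b : bad configuration
      obtain rfl := he.symm
      have mD3 : ∀ v, v ∈ D.1 ↔ (v ∈ A.1 ∧ v ≠ a ∧ v ≠ c) ∨ v = d ∨ v = c := by
        intro v
        have h1 := mD0 v
        have h2 := mC' v
        clear * - h1 h2 haA haB hbA hbB hcB hcC hdC hdB hca hac had hda hdb hbd hbc hcb hab' hba' hcd' hdc' hbC haC hcA hdA
        rcases eq_or_ne v a with rfl | e1 <;> rcases eq_or_ne v b with rfl | e2 <;>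
          rcases eq_or_ne v c with rfl | e3 <;> rcases eq_or_ne v d with rfl | e4 <;> tauto
      have hdD : d ∈ D.1 := (mD3 d).2 (Or.inr (Or.inl rfl))
      have hdg : d = g := by
        rcases (mD2 d).1 hdD with ⟨h1, _⟩ | h1
        · exact absurd h1 hdA
        · exact h1
      have hda2 : G.Adj d a := by rw [hdg, hah]; exact hgh
      have hbD : b ∉ D.1 := by
        intro hh
        rcases (mD3 b).1 hh with ⟨h1, _⟩ | h1 | h1
        · exact hbA h1
        · exact hbd h1
        · exact hbc h1
      have hnbd : ¬G.Adj b d := by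
        refine nBD b d (sd_pair hbB hbD hdD hdB ?_)
        intro w w1 w2
        have h1 := mB w
        have h2 := mD3 w
        clear * - h1 h2 w1 w2 haA haB hbA hbB hcB hcC hdC hdB hca hac had hda hdb hbd hbc hcb hab' hba' hcd' hdc' hbC haC hcA hdA haD
        rcases eq_or_ne w a with rfl | e1 <;> rcases eq_or_ne w c with rfl | e2 <;> tauto
      by_cases hGac : G.Adj a c
      · exact hG.2 ⟨c, d, a, b, hcd', hca, hcb, hda, hdb, hab', hcd, hGac.symm,
          hef.symm, hda2, hab, fun hh => hnbd hh.symm⟩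
      · exact hG.1 ⟨a, b, c, d, hab', hac, had, hbc, hbd, hcd', hab, hef, hcd, hda2,
          hGac, hnbd⟩
    · -- e = d : D = B, contradiction
      obtain rfl := he.symm
      refine hne.2 (Subtype.ext (Finset.ext fun v => ?_))
      have h1 := mB v
      have h2 := mD0 v
      have h3 := mC' v
      clear * - h1 h2 h3 haA haB hbA hbB hcB hcC hdC hdB hca hac had hda hdb hbd hbc hcb hab' hba' hcd' hdc' hbC haC hcA hdA
      rcases eq_or_ne v a with rfl | e1 <;> rcases eq_or_ne v b with rfl | e2 <;>
        rcases eq_or_ne v c with rfl | e3 <;> rcases eq_or_ne v d with rfl | e4 <;> tauto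
  · -- f outside A : impossible
    exfalso
    have hfA : f ∉ A.1 := by rcases hfs.2.2 with hh | hh | hh; exacts [hh, absurd hh hfa, absurd hh hfc]
    have haD : a ∉ D.1 := by
      intro hh
      rcases (mD0 a).1 hh with ⟨h1, _⟩ | h1
      · exact haC h1
      · exact hfA (h1 ▸ haA)
    have hah : a = h := by
      rcases (mA a).1 haA with ⟨h1, _⟩ | h1
      · exact absurd h1 haD
      · exact h1
    have hcD : c ∉ D.1 := by
      intro hh
      rcases (mD0 c).1 hh with ⟨h1, _⟩ | h1
      · exact hcC h1
      · exact hfA (h1 ▸ hcA.1)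
    have hch : c = h := by
      rcases (mA c).1 hcA.1 with ⟨h1, _⟩ | h1
      · exact absurd h1 hcD
      · exact h1
    exact hca (hch.trans hah.symm)
end

section
/- Let G be a (C4,diamond)-free graph. For each induced 4-cycle ABCD of F_k(G) and each vertex X of F_k(G) outside {A,B,C,D}, if X is adjacent to two non-consecutive vertices of the cycle ABCD, then X is adjacent to all four of A, B, C, D. -/
set_option maxHeartbeats 1000000


open Finset

section Aux
open scoped symmDiff
variable {V : Type*} [DecidableEq V]


private lemma sd_trans (X Y Z : Finset V) : (X ∆ Y) ∆ (Y ∆ Z) = X ∆ Z := by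
  rw [symmDiff_assoc, symmDiff_symmDiff_cancel_left]

private lemma sd_mid {a b d : V} (hab : a ≠ b) (hbd : b ≠ d) (had : a ≠ d) :
    ({a, b} : Finset V) ∆ {b, d} = {a, d} := by
  ext z
  by_cases h1 : z = a <;> by_cases h2 : z = b <;> by_cases h3 : z = d <;>
    simp_all [Finset.mem_symmDiff]

private lemma sd_disj {a b c d : V} (hab : a ≠ b) (hcd : c ≠ d) (hac : a ≠ c)
    (had : a ≠ d) (hbc : b ≠ c) (hbd : b ≠ d) :
    ({a, b} : Finset V) ∆ {c, d} = {a, b, c, d} := by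
  ext z
  by_cases h1 : z = a <;> by_cases h2 : z = b <;> by_cases h3 : z = c <;> by_cases h4 : z = d <;>
    simp_all [Finset.mem_symmDiff]

private lemma one_side {A B : Finset V} (hcard : A.card = B.card) {x y : V} (hxy : x ≠ y)
    (hs : A ∆ B = {x, y}) (hx1 : x ∈ A) (hx2 : x ∉ B) : y ∈ B ∧ y ∉ A := by
  have hy : y ∈ A ∆ B := by rw [hs]; simp
  rw [Finset.mem_symmDiff] at hy
  rcases hy with ⟨hyA, hyB⟩ | hy
  · exfalso
    have hsub : B ⊆ A := by
      intro z hz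
      by_contra hzA
      have hz' : z ∈ A ∆ B := by rw [Finset.mem_symmDiff]; exact Or.inr ⟨hz, hzA⟩
      rw [hs] at hz'
      simp only [Finset.mem_insert, Finset.mem_singleton] at hz'
      rcases hz' with rfl | rfl
      · exact hzA hx1
      · exact hzA hyA
    have hBA : B = A := Finset.eq_of_subset_of_card_le hsub hcard.le
    rw [hBA, symmDiff_self] at hs
    have : x ∈ (⊥ : Finset V) := by rw [hs]; simp
    simp at this
  · exact hy

private lemma adj_struct {G : SimpleGraph V} {A B : Finset V} (hcard : A.card = B.card)
    (h : ∃ a b, G.Adj a b ∧ A ∆ B = {a, b}) :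
    ∃ a b, G.Adj a b ∧ A ∆ B = {a, b} ∧ a ∈ A ∧ a ∉ B ∧ b ∈ B ∧ b ∉ A := by
  obtain ⟨a, b, hab, hs⟩ := h
  have hne : a ≠ b := hab.ne
  have ha : a ∈ A ∆ B := by rw [hs]; simp
  rw [Finset.mem_symmDiff] at ha
  rcases ha with ⟨h1, h2⟩ | ⟨h1, h2⟩
  · obtain ⟨h3, h4⟩ := one_side hcard hne hs h1 h2
    exact ⟨a, b, hab, hs, h1, h2, h3, h4⟩
  · have hs' : B ∆ A = {a, b} := by rw [symmDiff_comm]; exact hs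
    obtain ⟨h3, h4⟩ := one_side hcard.symm hne hs' h1 h2
    exact ⟨b, a, hab.symm, by rw [hs]; exact Finset.pair_comm a b, h3, h4, h1, h2⟩


private lemma diag_edges {G : SimpleGraph V} (hG : C4DiamondFree G) {a b c d : V}
    (hab : G.Adj a b) (hbc : G.Adj b c) (hcd : G.Adj c d) (hda : G.Adj d a)
    (hac : a ≠ c) (hbd : b ≠ d) :
    G.Adj a c ∧ G.Adj b d := by
  by_cases h1 : G.Adj a c <;> by_cases h2 : G.Adj b d
  · exact ⟨h1, h2⟩
  · exact absurd ⟨a, b, c, d, hab.ne, hac, hda.ne.symm, hbc.ne, hbd, hcd.ne,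
      hab, h1, hda.symm, hbc, hcd, h2⟩ hG.2
  · exact absurd ⟨b, a, d, c, hab.ne.symm, hbd, hbc.ne, hda.ne.symm, hac, hcd.ne.symm,
      hab.symm, h2, hbc, hda.symm, hcd.symm, h1⟩ hG.2
  · exact absurd ⟨a, b, c, d, hab.ne, hac, hda.ne.symm, hbc.ne, hbd, hcd.ne,
      hab, hbc, hcd, hda, h1, h2⟩ hG.1

private lemma link_struct {G : SimpleGraph V} {A C Y : Finset V} {u v : V}
    (hcAY : A.card = Y.card) (hcYC : Y.card = C.card)
    (hACs : A ∆ C = {u, v}) (huA : u ∈ A) (huC : u ∉ C) (hvC : v ∈ C) (hvA : v ∉ A)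
    (hAY : ∃ a b, G.Adj a b ∧ A ∆ Y = {a, b}) (hYC : ∃ a b, G.Adj a b ∧ Y ∆ C = {a, b}) :
    ∃ w, G.Adj u w ∧ G.Adj v w ∧ w ≠ u ∧ w ≠ v ∧
      ((w ∉ A ∧ w ∉ C ∧ A ∆ Y = {u, w} ∧ Y ∆ C = {w, v}) ∨
       (w ∈ A ∧ w ∈ C ∧ A ∆ Y = {w, v} ∧ Y ∆ C = {u, w})) := by
  obtain ⟨p, x, hpx, hs1, hpA, hpY, hxY, hxA⟩ := adj_struct hcAY hAY
  obtain ⟨y, q, hyq, hs2, hyY, hyC, hqC, hqY⟩ := adj_struct hcYC hYC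
  have hcomp : ({p, x} : Finset V) ∆ {y, q} = {u, v} := by
    rw [← hs1, ← hs2, sd_trans, hACs]
  have hpx' : p ≠ x := fun h => hpY (h ▸ hxY)
  have hpy : p ≠ y := fun h => hpY (h ▸ hyY)
  have hxq : x ≠ q := fun h => hqY (h ▸ hxY)
  by_cases hxy : x = y
  · subst hxy
    by_cases hpq : p = q
    · exfalso
      subst hpq
      rw [pair_comm x p, symmDiff_self] at hcomp
      have : u ∈ (⊥ : Finset V) := by rw [hcomp]; simp
      simp at this
    · have heq : ({p, q} : Finset V) = {u, v} := by
        rw [← hcomp, sd_mid hpx' hxq hpq]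
      have hp2 : p = u ∨ p = v := by
        have : p ∈ ({u, v} : Finset V) := by rw [← heq]; simp
        simpa using this
      have hq2 : q = u ∨ q = v := by
        have : q ∈ ({u, v} : Finset V) := by rw [← heq]; simp
        simpa using this
      rcases hp2 with rfl | rfl
      · rcases hq2 with rfl | rfl
        · exact absurd rfl hpq
        · exact ⟨x, hpx, hyq.symm, fun h => hpY (h ▸ hxY), fun h => hyC (h ▸ hvC),
            Or.inl ⟨hxA, hyC, hs1, hs2⟩⟩
      · exact absurd hpA hvA
  · by_cases hpq : p = q
    · subst hpq
      have heq : ({x, y} : Finset V) = {u, v} := by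
        rw [← hcomp, pair_comm p x, pair_comm y p, sd_mid (Ne.symm hpx') hpy hxy]
      have hx2 : x = u ∨ x = v := by
        have : x ∈ ({u, v} : Finset V) := by rw [← heq]; simp
        simpa using this
      have hy2 : y = u ∨ y = v := by
        have : y ∈ ({u, v} : Finset V) := by rw [← heq]; simp
        simpa using this
      rcases hx2 with rfl | rfl
      · exact absurd huA hxA
      · rcases hy2 with rfl | rfl
        · exact ⟨p, hyq, hpx.symm, fun h => hpY (h ▸ hyY), fun h => hvA (h ▸ hpA),
            Or.inr ⟨hpA, hqC, hs1, hs2⟩⟩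
        · exact absurd rfl hxy
    · exfalso
      have hp2 : p = u ∨ p = v := by
        have : p ∈ ({u, v} : Finset V) := by
          rw [← hcomp, Finset.mem_symmDiff]
          exact Or.inl ⟨by simp, by simp [hpy, hpq]⟩
        simpa using this
      have hx2 : x = u ∨ x = v := by
        have : x ∈ ({u, v} : Finset V) := by
          rw [← hcomp, Finset.mem_symmDiff]
          exact Or.inl ⟨by simp, by simp [hxy, hxq]⟩
        simpa using this
      have hy2 : y = u ∨ y = v := by
        have : y ∈ ({u, v} : Finset V) := by
          rw [← hcomp, Finset.mem_symmDiff]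
          exact Or.inr ⟨by simp, by simp [Ne.symm hpy, Ne.symm hxy]⟩
        simpa using this
      rcases hp2 with rfl | rfl <;> rcases hx2 with rfl | rfl <;>
        rcases hy2 with rfl | rfl <;> simp_all

private lemma main_aux {G : SimpleGraph V} (hG : C4DiamondFree G)
    {k : ℕ} {A B C D X : Finset V}
    (hA : A.card = k) (hB : B.card = k) (hC : C.card = k) (hD : D.card = k) (hXc : X.card = k)
    (hAB : ∃ a b, G.Adj a b ∧ A ∆ B = {a, b})
    (hBC : ∃ a b, G.Adj a b ∧ B ∆ C = {a, b})
    (hCD : ∃ a b, G.Adj a b ∧ C ∆ D = {a, b})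
    (hDA : ∃ a b, G.Adj a b ∧ D ∆ A = {a, b})
    (hAC : ¬ ∃ a b, G.Adj a b ∧ A ∆ C = {a, b})
    (hBD : ¬ ∃ a b, G.Adj a b ∧ B ∆ D = {a, b})
    (hACne : A ≠ C) (hBDne : B ≠ D) (hXB : X ≠ B) (hXD : X ≠ D)
    (hXA : ∃ a b, G.Adj a b ∧ X ∆ A = {a, b})
    (hXC : ∃ a b, G.Adj a b ∧ X ∆ C = {a, b}) :
    (∃ a b, G.Adj a b ∧ X ∆ B = {a, b}) ∧ (∃ a b, G.Adj a b ∧ X ∆ D = {a, b}) := by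
  have cancel : ∀ P Q R : Finset V, P ∆ Q = P ∆ R → Q = R := by
    intro P Q R h
    have h1 := symmDiff_symmDiff_cancel_left P Q
    rw [h, symmDiff_symmDiff_cancel_left] at h1
    exact h1.symm
  have hDA' : ∃ a b, G.Adj a b ∧ A ∆ D = {a, b} := by
    obtain ⟨a', b', h', hs'⟩ := hDA
    exact ⟨a', b', h', by rwa [symmDiff_comm] at hs'⟩
  have hCD' : ∃ a b, G.Adj a b ∧ D ∆ C = {a, b} := by
    obtain ⟨a', b', h', hs'⟩ := hCD
    exact ⟨a', b', h', by rwa [symmDiff_comm] at hs'⟩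
  have link_contra : ∀ u v : V, A ∆ C = {u, v} → u ∈ A → u ∉ C → v ∈ C → v ∉ A → False := by
    intro u v hACs huA huC hvC hvA
    obtain ⟨w1, hw1u, hw1v, hw1nu, hw1nv, hw1⟩ :=
      link_struct (hA.trans hB.symm) (hB.trans hC.symm) hACs huA huC hvC hvA hAB hBC
    obtain ⟨w2, hw2u, hw2v, hw2nu, hw2nv, hw2⟩ :=
      link_struct (hA.trans hD.symm) (hD.trans hC.symm) hACs huA huC hvC hvA hDA' hCD'
    have huv : ¬ G.Adj u v := fun h => hAC ⟨u, v, h, hACs⟩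
    have hw12 : w1 ≠ w2 := by
      intro h
      subst h
      rcases hw1 with ⟨h1A, h1C, e1, f1⟩ | ⟨h1A, h1C, e1, f1⟩ <;>
        rcases hw2 with ⟨h2A, h2C, e2, f2⟩ | ⟨h2A, h2C, e2, f2⟩
      · exact hBDne (cancel A B D (e1.trans e2.symm))
      · exact h1A h2A
      · exact h2A h1A
      · exact hBDne (cancel A B D (e1.trans e2.symm))
    have huv' : u ≠ v := fun h => hvA (h ▸ huA)
    exact huv (diag_edges hG hw1u hw1v.symm hw2v hw2u.symm huv' hw12).1
  obtain ⟨a, b, hab, hsAB, haA, haB, hbB, hbA⟩ := adj_struct (hA.trans hB.symm) hAB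
  obtain ⟨c, d, hcd, hsBC, hcB, hcC, hdC, hdB⟩ := adj_struct (hB.trans hC.symm) hBC
  have hACcomp : A ∆ C = {a, b} ∆ {c, d} := by rw [← hsAB, ← hsBC, sd_trans]
  have hac : a ≠ c := fun h => haB (h ▸ hcB)
  have hbd : b ≠ d := fun h => hdB (h ▸ hbB)
  by_cases hbc' : b = c
  · exfalso
    subst hbc'
    have had2 : a ≠ d := by
      intro h
      subst h
      apply hACne
      rw [pair_comm b a] at hACcomp
      rw [symmDiff_self] at hACcomp
      exact symmDiff_eq_bot.mp hACcomp
    have hACs : A ∆ C = {a, d} := by rw [hACcomp, sd_mid hab.ne hbd had2]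
    have haC : a ∉ C := by
      have h5 : a ∈ A ∆ C := by rw [hACs]; simp
      rw [Finset.mem_symmDiff] at h5
      rcases h5 with ⟨_, h⟩ | ⟨_, h⟩
      · exact h
      · exact absurd haA h
    have hdA : d ∉ A := by
      have h5 : d ∈ A ∆ C := by rw [hACs]; simp
      rw [Finset.mem_symmDiff] at h5
      rcases h5 with ⟨_, h⟩ | ⟨_, h⟩
      · exact absurd hdC h
      · exact h
    exact link_contra a d hACs haA haC hdC hdA
  by_cases had' : a = d
  · exfalso
    subst had'
    have hACs1 : A ∆ C = {b, c} := by
      rw [hACcomp, pair_comm a b, pair_comm c a, sd_mid hab.ne.symm hac hbc']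
    have hACs2 : A ∆ C = {c, b} := by rw [hACs1, pair_comm]
    have hcA : c ∈ A := by
      have h5 : c ∈ A ∆ C := by rw [hACs2]; simp
      rw [Finset.mem_symmDiff] at h5
      rcases h5 with ⟨h, _⟩ | ⟨h, _⟩
      · exact h
      · exact absurd h hcC
    have hbC : b ∈ C := by
      have h5 : b ∈ A ∆ C := by rw [hACs2]; simp
      rw [Finset.mem_symmDiff] at h5
      rcases h5 with ⟨h, _⟩ | ⟨h, _⟩
      · exact absurd h hbA
      · exact h
    exact link_contra c b hACs2 hcA hcC hbC hbA
  -- main (rectangle) case: |A ∆ C| = 4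
  have hACs : A ∆ C = {a, b, c, d} := by
    rw [hACcomp, sd_disj hab.ne hcd.ne hac had' hbc' hbd]
  have haC : a ∉ C := by
    have h5 : a ∈ A ∆ C := by rw [hACs]; simp
    rw [Finset.mem_symmDiff] at h5
    rcases h5 with ⟨_, h⟩ | ⟨_, h⟩
    · exact h
    · exact absurd haA h
  have hbC : b ∈ C := by
    have h5 : b ∈ A ∆ C := by rw [hACs]; simp
    rw [Finset.mem_symmDiff] at h5
    rcases h5 with ⟨h, _⟩ | ⟨h, _⟩
    · exact absurd h hbA
    · exact h
  have hcA : c ∈ A := by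
    have h5 : c ∈ A ∆ C := by rw [hACs]; simp
    rw [Finset.mem_symmDiff] at h5
    rcases h5 with ⟨h, _⟩ | ⟨h, _⟩
    · exact h
    · exact absurd h hcC
  have hdA : d ∉ A := by
    have h5 : d ∈ A ∆ C := by rw [hACs]; simp
    rw [Finset.mem_symmDiff] at h5
    rcases h5 with ⟨_, h⟩ | ⟨_, h⟩
    · exact absurd hdC h
    · exact h
  have classify : ∀ Y : Finset V, Y.card = k →
      (∃ p q, G.Adj p q ∧ A ∆ Y = {p, q}) → (∃ p q, G.Adj p q ∧ Y ∆ C = {p, q}) →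
      A ∆ Y = {a, b} ∨ A ∆ Y = {c, d} ∨
        ((A ∆ Y = {a, d} ∨ A ∆ Y = {c, b}) ∧ G.Adj a c ∧ G.Adj b d) := by
    intro Y hYc hAYx hYCx
    obtain ⟨p, xx, hpxx, hsAY, hpA, hpY, hxxY, hxxA⟩ := adj_struct (hA.trans hYc.symm) hAYx
    have hCYx : ∃ p q, G.Adj p q ∧ C ∆ Y = {p, q} := by
      obtain ⟨p', q', h', hs'⟩ := hYCx
      exact ⟨p', q', h', by rwa [symmDiff_comm] at hs'⟩
    obtain ⟨q, yy, hqyy, hsCY, hqC, hqY, hyyY, hyyC⟩ := adj_struct (hC.trans hYc.symm) hCYx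
    have hsYC : Y ∆ C = {q, yy} := by rw [symmDiff_comm, hsCY]
    have hcomp2 : ({p, xx} : Finset V) ∆ {q, yy} = {a, b, c, d} := by
      rw [← hsAY, ← hsYC, sd_trans, hACs]
    have hpxx' : p ≠ xx := fun h => hpY (h ▸ hxxY)
    have hqyy' : q ≠ yy := fun h => hqY (h ▸ hyyY)
    have hpyy : p ≠ yy := fun h => hpY (h ▸ hyyY)
    have hxxq : xx ≠ q := fun h => hqY (h ▸ hxxY)
    by_cases hpq : p = q
    · subst hpq
      by_cases hxxyy : xx = yy
      · exfalso
        subst hxxyy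
        rw [symmDiff_self] at hcomp2
        have h6 : a ∈ (⊥ : Finset V) := by rw [hcomp2]; simp
        simp at h6
      · exfalso
        rw [pair_comm p xx, sd_mid hpxx'.symm hpyy hxxyy] at hcomp2
        have ha4 : a = xx ∨ a = yy := by
          have : a ∈ ({xx, yy} : Finset V) := by rw [hcomp2]; simp
          simpa using this
        have hb4 : b = xx ∨ b = yy := by
          have : b ∈ ({xx, yy} : Finset V) := by rw [hcomp2]; simp
          simpa using this
        have hc4 : c = xx ∨ c = yy := by
          have : c ∈ ({xx, yy} : Finset V) := by rw [hcomp2]; simp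
          simpa using this
        have h1' : a ≠ b := hab.ne
        rcases ha4 with rfl | rfl <;> rcases hb4 with rfl | rfl <;>
          rcases hc4 with rfl | rfl <;>
          first
          | exact h1' rfl
          | exact hac rfl
          | exact hbc' rfl
    · by_cases hxxyy : xx = yy
      · exfalso
        subst hxxyy
        rw [pair_comm q xx, sd_mid hpxx' hxxq hpq] at hcomp2
        have ha4 : a = p ∨ a = q := by
          have : a ∈ ({p, q} : Finset V) := by rw [hcomp2]; simp
          simpa using this
        have hb4 : b = p ∨ b = q := by
          have : b ∈ ({p, q} : Finset V) := by rw [hcomp2]; simp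
          simpa using this
        have hc4 : c = p ∨ c = q := by
          have : c ∈ ({p, q} : Finset V) := by rw [hcomp2]; simp
          simpa using this
        have h1' : a ≠ b := hab.ne
        rcases ha4 with rfl | rfl <;> rcases hb4 with rfl | rfl <;>
          rcases hc4 with rfl | rfl <;>
          first
          | exact h1' rfl
          | exact hac rfl
          | exact hbc' rfl
      · rw [sd_disj hpxx' hqyy' hpq hpyy hxxq hxxyy] at hcomp2
        have hp4 : p = a ∨ p = c := by
          have h6 : p ∈ ({a, b, c, d} : Finset V) := by rw [← hcomp2]; simp
          simp only [Finset.mem_insert, Finset.mem_singleton] at h6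
          rcases h6 with rfl | rfl | rfl | rfl
          · exact Or.inl rfl
          · exact absurd hpA hbA
          · exact Or.inr rfl
          · exact absurd hpA hdA
        have hxx4 : xx = b ∨ xx = d := by
          have h6 : xx ∈ ({a, b, c, d} : Finset V) := by rw [← hcomp2]; simp
          simp only [Finset.mem_insert, Finset.mem_singleton] at h6
          rcases h6 with rfl | rfl | rfl | rfl
          · exact absurd haA hxxA
          · exact Or.inl rfl
          · exact absurd hcA hxxA
          · exact Or.inr rfl
        have hq4 : q = b ∨ q = d := by
          have h6 : q ∈ ({a, b, c, d} : Finset V) := by rw [← hcomp2]; simp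
          simp only [Finset.mem_insert, Finset.mem_singleton] at h6
          rcases h6 with rfl | rfl | rfl | rfl
          · exact absurd hqC haC
          · exact Or.inl rfl
          · exact absurd hqC hcC
          · exact Or.inr rfl
        have hyy4 : yy = a ∨ yy = c := by
          have h6 : yy ∈ ({a, b, c, d} : Finset V) := by rw [← hcomp2]; simp
          simp only [Finset.mem_insert, Finset.mem_singleton] at h6
          rcases h6 with rfl | rfl | rfl | rfl
          · exact Or.inl rfl
          · exact absurd hbC hyyC
          · exact Or.inr rfl
          · exact absurd hdC hyyC
        rcases hp4 with rfl | rfl <;> rcases hxx4 with rfl | rfl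
        · exact Or.inl hsAY
        · -- p = a, xx = d
          have hyc : yy = c := by
            rcases hyy4 with rfl | rfl
            · exact absurd rfl hpyy
            · rfl
          have hqb : q = b := by
            rcases hq4 with rfl | rfl
            · rfl
            · exact absurd rfl hxxq
          subst hyc; subst hqb
          have diag := diag_edges hG hab hqyy hcd hpxx.symm hac hbd
          exact Or.inr (Or.inr ⟨Or.inl hsAY, diag⟩)
        · -- p = c, xx = b
          have hya : yy = a := by
            rcases hyy4 with rfl | rfl
            · rfl
            · exact absurd rfl hpyy
          have hqd : q = d := by
            rcases hq4 with rfl | rfl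
            · exact absurd rfl hxxq
            · rfl
          subst hya; subst hqd
          have diag := diag_edges hG hab hpxx.symm hcd hqyy hac hbd
          exact Or.inr (Or.inr ⟨Or.inr hsAY, diag⟩)
        · exact Or.inr (Or.inl hsAY)
  -- apply classification to D
  have hDclass := classify D hD hDA' hCD'
  have hsAD : A ∆ D = {c, d} := by
    rcases hDclass with h6 | h6 | ⟨h6 | h6, hEac, hEbd⟩
    · exact absurd (cancel A B D (hsAB.trans h6.symm)) hBDne
    · exact h6
    · exfalso
      apply hBD
      refine ⟨b, d, hEbd, ?_⟩
      rw [← sd_trans B A D, symmDiff_comm B A, hsAB, h6, pair_comm a b,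
        sd_mid hab.ne.symm had' hbd]
    · exfalso
      apply hBD
      refine ⟨a, c, hEac, ?_⟩
      rw [← sd_trans B A D, symmDiff_comm B A, hsAB, h6, pair_comm c b,
        sd_mid hab.ne hbc' hac]
  -- apply classification to X
  have hAXx : ∃ p q, G.Adj p q ∧ A ∆ X = {p, q} := by
    obtain ⟨p', q', h', hs'⟩ := hXA
    exact ⟨p', q', h', by rwa [symmDiff_comm] at hs'⟩
  have hXclass := classify X hXc hAXx hXC
  rcases hXclass with h6 | h6 | ⟨h6 | h6, hEac, hEbd⟩
  · exact absurd (cancel A B X (hsAB.trans h6.symm)).symm hXB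
  · exact absurd (cancel A D X (hsAD.trans h6.symm)).symm hXD
  · constructor
    · refine ⟨d, b, hEbd.symm, ?_⟩
      rw [← sd_trans X A B, symmDiff_comm X A, h6, hsAB, pair_comm a d,
        sd_mid (Ne.symm had') hab.ne hbd.symm]
    · refine ⟨a, c, hEac, ?_⟩
      rw [← sd_trans X A D, symmDiff_comm X A, h6, hsAD, pair_comm c d,
        sd_mid had' hcd.ne.symm hac]
  · constructor
    · refine ⟨c, a, hEac.symm, ?_⟩
      rw [← sd_trans X A B, symmDiff_comm X A, h6, hsAB, pair_comm a b,
        sd_mid (Ne.symm hbc') hab.ne.symm hac.symm]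
    · refine ⟨b, d, hEbd, ?_⟩
      rw [← sd_trans X A D, symmDiff_comm X A, h6, hsAD, pair_comm c b,
        sd_mid hbc' hcd.ne hbd]

end Aux

open scoped symmDiff in
/-- property (P1): if G is (C4,diamond)-free, ABCD an induced
4-cycle of F_k(G) and X a further vertex adjacent to two non-consecutive
vertices of the cycle, then X is adjacent to all of A, B, C, D. -/

theorem adjacent_to_opposite_implies_all {V : Type*} [Fintype V] [DecidableEq V]
    (G : SimpleGraph V) (hG : C4DiamondFree G) (n k : ℕ)
    (hn : Fintype.card V = n) (hk1 : 1 ≤ k) (hk2 : k ≤ n - 1)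
    (A B C D X : {s : Finset V // s.card = k})
    (hAB : (tokenGraph G k).Adj A B) (hBC : (tokenGraph G k).Adj B C)
    (hCD : (tokenGraph G k).Adj C D) (hDA : (tokenGraph G k).Adj D A)
    (hAC : ¬(tokenGraph G k).Adj A C) (hBD : ¬(tokenGraph G k).Adj B D)
    (hne : A ≠ C ∧ B ≠ D)
    (hX : X ≠ A ∧ X ≠ B ∧ X ≠ C ∧ X ≠ D)
    (hadj : ((tokenGraph G k).Adj X A ∧ (tokenGraph G k).Adj X C) ∨
            ((tokenGraph G k).Adj X B ∧ (tokenGraph G k).Adj X D)) :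
    (tokenGraph G k).Adj X A ∧ (tokenGraph G k).Adj X B ∧
    (tokenGraph G k).Adj X C ∧ (tokenGraph G k).Adj X D := by
  obtain ⟨hne1, hne2⟩ := hne
  obtain ⟨hXA, hXB, hXC, hXD⟩ := hX
  have hne1' : A.1 ≠ C.1 := fun h => hne1 (Subtype.ext h)
  have hne2' : B.1 ≠ D.1 := fun h => hne2 (Subtype.ext h)
  have hXA' : X.1 ≠ A.1 := fun h => hXA (Subtype.ext h)
  have hXB' : X.1 ≠ B.1 := fun h => hXB (Subtype.ext h)
  have hXC' : X.1 ≠ C.1 := fun h => hXC (Subtype.ext h)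
  have hXD' : X.1 ≠ D.1 := fun h => hXD (Subtype.ext h)
  rcases hadj with ⟨h1, h2⟩ | ⟨h1, h2⟩
  · have key := main_aux hG A.2 B.2 C.2 D.2 X.2 hAB hBC hCD hDA hAC hBD
      hne1' hne2' hXB' hXD' h1 h2
    exact ⟨h1, key.1, h2, key.2⟩
  · have hCA : ¬ ∃ a b, G.Adj a b ∧ C.1 ∆ A.1 = {a, b} := by
      rintro ⟨a, b, hab, hs⟩
      exact hAC ⟨a, b, hab, by rwa [symmDiff_comm] at hs⟩
    have key := main_aux hG B.2 C.2 D.2 A.2 X.2 hBC hCD hDA hAB hBD hCA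
      hne2' (fun h => hne1 (Subtype.ext h.symm)) hXC' hXA' h1 h2
    exact ⟨key.2, h1, key.1, h2⟩
end

section
/- Let G be a (C4,diamond)-free graph. If AB and A'B' are two edges of F_k(G) that are connected by a ladder (i.e., they are the two end rungs of an induced subgraph of F_k(G) isomorphic to K₂ □ P_m), then A △ B = A' △ B'; that is, both edges correspond to moving a token along the same edge of G. -/
open Finset

/-- `u, v : Fin (m+1) → α` are the vertices of an induced ladder `K₂ □ P_m`
in `F`: the `u i` form one side, the `v i` the other, the rungs are the edges
`u i -- v i`, and there are no further adjacencies or coincidences. -/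
def IsLadder {α : Type*} (F : SimpleGraph α) (m : ℕ)
    (u v : Fin (m + 1) → α) : Prop :=
  Function.Injective u ∧ Function.Injective v ∧ (∀ i j, u i ≠ v j) ∧
  (∀ i j : Fin (m + 1),
    F.Adj (u i) (u j) ↔ ((i : ℕ) + 1 = j ∨ (j : ℕ) + 1 = i)) ∧
  (∀ i j : Fin (m + 1),
    F.Adj (v i) (v j) ↔ ((i : ℕ) + 1 = j ∨ (j : ℕ) + 1 = i)) ∧
  (∀ i j : Fin (m + 1), F.Adj (u i) (v j) ↔ i = j)

/-- The edges `ab` and `a'b'` of `F` are connected by a ladder: either they are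
equal (as unordered pairs), or there is an induced ladder in `F` having them as
its two end rungs. -/
def ConnectedByLadder {α : Type*} (F : SimpleGraph α) (a b a' b' : α) : Prop :=
  ({a, b} : Set α) = {a', b'} ∨
  ∃ (m : ℕ) (u v : Fin (m + 1) → α), 1 ≤ m ∧ IsLadder F m u v ∧
    ((u 0 = a ∧ v 0 = b) ∨ (u 0 = b ∧ v 0 = a)) ∧
    ((u (Fin.last m) = a' ∧ v (Fin.last m) = b') ∨
      (u (Fin.last m) = b' ∧ v (Fin.last m) = a'))


section ladderHelpers

set_option maxHeartbeats 2000000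

variable {V : Type*} [DecidableEq V] {G : SimpleGraph V} {k : ℕ}

lemma tg_char_of {A B : Finset V} {a b : V} (hsd : symmDiff A B = {a, b})
    (ha' : a ∉ B) (hb : b ∈ B) (hb' : b ∉ A) :
    ∀ x, x ∈ B ↔ (x = b ∨ (x ≠ a ∧ x ∈ A)) := by
  have hmem : ∀ x, ((x ∈ A ∧ x ∉ B) ∨ (x ∈ B ∧ x ∉ A)) ↔ (x = a ∨ x = b) := by
    intro x
    rw [← Finset.mem_symmDiff, hsd, Finset.mem_insert, Finset.mem_singleton]
  intro x
  constructor
  · intro hxB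
    by_cases hxb : x = b
    · exact Or.inl hxb
    by_cases hxA : x ∈ A
    · refine Or.inr ⟨?_, hxA⟩
      rintro rfl
      exact ha' hxB
    · rcases (hmem x).mp (Or.inr ⟨hxB, hxA⟩) with rfl | rfl
      · exact absurd hxB ha'
      · exact absurd rfl hxb
  · rintro (rfl | ⟨hxa, hxA⟩)
    · exact hb
    · by_contra hxB
      rcases (hmem x).mp (Or.inl ⟨hxA, hxB⟩) with rfl | rfl
      · exact hxa rfl
      · exact hxB hb

lemma adj_struct_s13 {A B : {s : Finset V // s.card = k}}
    (h : (tokenGraph G k).Adj A B) :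
    ∃ a b : V, G.Adj a b ∧ a ∈ A.1 ∧ a ∉ B.1 ∧ b ∈ B.1 ∧ b ∉ A.1 ∧
      symmDiff A.1 B.1 = {a, b} ∧
      (∀ x, x ∈ B.1 ↔ (x = b ∨ (x ≠ a ∧ x ∈ A.1))) := by
  obtain ⟨a, b, hab, hsd⟩ := h
  have hne : a ≠ b := hab.ne
  have hmem : ∀ x, ((x ∈ A.1 ∧ x ∉ B.1) ∨ (x ∈ B.1 ∧ x ∉ A.1)) ↔ (x = a ∨ x = b) := by
    intro x
    rw [← Finset.mem_symmDiff, hsd, Finset.mem_insert, Finset.mem_singleton]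
  have hcard : A.1.card = B.1.card := by rw [A.2, B.2]
  have bothA : ∀ {p q : V}, p ≠ q → (p ∈ A.1 ∧ p ∉ B.1) → (q ∈ A.1 ∧ q ∉ B.1) →
      (∀ x, (x = a ∨ x = b) → x ∈ A.1) → False := by
    rintro p q hpq ⟨hp, hp'⟩ ⟨hq, hq'⟩ hall
    have hsub : B.1 ⊆ A.1 := by
      intro x hx
      by_cases hxA : x ∈ A.1
      · exact hxA
      · exact hall x ((hmem x).mp (Or.inr ⟨hx, hxA⟩))
    have hEq : B.1 = A.1 := Finset.eq_of_subset_of_card_le hsub (le_of_eq hcard)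
    rw [hEq, symmDiff_self] at hsd
    have : a ∈ (⊥ : Finset V) := by
      rw [hsd]; simp
    simp at this
  have bothB : ∀ {p q : V}, p ≠ q → (p ∈ B.1 ∧ p ∉ A.1) → (q ∈ B.1 ∧ q ∉ A.1) →
      (∀ x, (x = a ∨ x = b) → x ∈ B.1) → False := by
    rintro p q hpq ⟨hp, hp'⟩ ⟨hq, hq'⟩ hall
    have hsub : A.1 ⊆ B.1 := by
      intro x hx
      by_cases hxB : x ∈ B.1
      · exact hxB
      · exact hall x ((hmem x).mp (Or.inl ⟨hx, hxB⟩))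
    have hEq : A.1 = B.1 := Finset.eq_of_subset_of_card_le hsub (le_of_eq hcard.symm)
    rw [hEq, symmDiff_self] at hsd
    have : a ∈ (⊥ : Finset V) := by
      rw [hsd]; simp
    simp at this
  have hA := (hmem a).mpr (Or.inl rfl)
  have hB := (hmem b).mpr (Or.inr rfl)
  rcases hA with hA | hA <;> rcases hB with hB | hB
  · exact absurd (bothA hne hA hB (by rintro x (rfl | rfl); exacts [hA.1, hB.1])) not_false
  · exact ⟨a, b, hab, hA.1, hA.2, hB.1, hB.2, hsd,
      tg_char_of hsd hA.2 hB.1 hB.2⟩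
  · have hsd' : symmDiff A.1 B.1 = {b, a} := by rw [hsd, Finset.pair_comm]
    exact ⟨b, a, hab.symm, hB.1, hB.2, hA.1, hA.2, hsd',
      tg_char_of hsd' hB.2 hA.1 hA.2⟩
  · exact absurd (bothB hne hA hB (by rintro x (rfl | rfl); exacts [hA.1, hB.1])) not_false

lemma pair_of_adj {A B : {s : Finset V // s.card = k}} {p q : V}
    (h : (tokenGraph G k).Adj A B) (hp : p ∈ symmDiff A.1 B.1)
    (hq : q ∈ symmDiff A.1 B.1) (hpq : p ≠ q) : G.Adj p q := by
  obtain ⟨a, b, hab, hsd⟩ := h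
  rw [hsd, Finset.mem_insert, Finset.mem_singleton] at hp hq
  rcases hp with rfl | rfl <;> rcases hq with rfl | rfl <;>
    first
      | exact absurd rfl hpq
      | exact hab
      | exact hab.symm

lemma no_three {A B : {s : Finset V // s.card = k}} {p q r : V}
    (h : (tokenGraph G k).Adj A B) (hp : p ∈ symmDiff A.1 B.1)
    (hq : q ∈ symmDiff A.1 B.1) (hr : r ∈ symmDiff A.1 B.1)
    (hpq : p ≠ q) (hpr : p ≠ r) (hqr : q ≠ r) : False := by
  obtain ⟨a, b, hab, hsd⟩ := h
  rw [hsd, Finset.mem_insert, Finset.mem_singleton] at hp hq hr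
  rcases hp with h1 | h1 <;> rcases hq with h2 | h2 <;> rcases hr with h3 | h3 <;>
    first
      | exact hpq (h1.trans h2.symm)
      | exact hpr (h1.trans h3.symm)
      | exact hqr (h2.trans h3.symm)


/-- Key geometric lemma: an induced square in the token graph of a
(C4,diamond)-free graph has equal opposite rungs. -/
lemma square (hG : C4DiamondFree G)
    (X Y X' Y' : {s : Finset V // s.card = k})
    (hXY : (tokenGraph G k).Adj X Y) (hXX' : (tokenGraph G k).Adj X X')
    (hYY' : (tokenGraph G k).Adj Y Y') (hX'Y' : (tokenGraph G k).Adj X' Y')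
    (hXY' : ¬(tokenGraph G k).Adj X Y') (hX'Y : ¬(tokenGraph G k).Adj X' Y)
    (nXY' : X ≠ Y') (nX'Y : X' ≠ Y) :
    symmDiff X.1 Y.1 = symmDiff X'.1 Y'.1 := by
  obtain ⟨nC4, nDia⟩ := hG
  obtain ⟨a, b, hab, haX, haY, hbY, hbX, sd1, chY⟩ := adj_struct_s13 hXY
  obtain ⟨c, d, hcd, hcX, hcX', hdX', hdX, sd2, chX'⟩ := adj_struct_s13 hXX'
  obtain ⟨e, f, hef, heY, heY', hfY', hfY, sd3, chY'⟩ := adj_struct_s13 hYY'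
  have hne_ab : a ≠ b := fun h => hbX (h ▸ haX)
  have hne_cd : c ≠ d := fun h => hdX (h ▸ hcX)
  have hne_ad : a ≠ d := fun h => hdX (h ▸ haX)
  have hne_cb : c ≠ b := fun h => hbX (h ▸ hcX)
  have hee : e = b ∨ (e ≠ a ∧ e ∈ X.1) := (chY e).mp heY
  have hfb : f ≠ b := fun h => hfY ((chY f).mpr (Or.inl h))
  have hfa : f = a ∨ f ∉ X.1 := by
    by_cases h : f = a
    · exact Or.inl h
    · exact Or.inr fun hS => hfY ((chY f).mpr (Or.inr ⟨h, hS⟩))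
  by_cases hbd : b = d
  · subst hbd
    by_cases hac : a = c
    · subst hac
      exact absurd (Subtype.ext (Finset.ext fun x => (chX' x).trans (chY x).symm)) nX'Y
    · -- a ≠ c, b = d (named b now)
      have sdX'Y : symmDiff X'.1 Y.1 = {a, c} := by
        clear hXY hXX' hYY' hX'Y' hXY' hX'Y nXY' nX'Y sd1 sd2 sd3 nC4 nDia hab hcd hef chY' heY heY' hfY' hfY hee hfb hfa
        ext x
        simp only [Finset.mem_symmDiff, Finset.mem_insert, Finset.mem_singleton, chX', chY]
        rcases eq_or_ne x a with rfl | hxa <;> rcases eq_or_ne x b with rfl | hxb <;>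
          rcases eq_or_ne x c with rfl | hxc <;> tauto
      have hnac : ¬G.Adj a c := fun hg => hX'Y ⟨a, c, hg, sdX'Y⟩
      have hca : c ≠ a := fun h => hac h.symm
      rcases hee with heb | ⟨hea, heS⟩
      · obtain rfl := heb.symm
        -- e = b (token b moved back out)
        rcases hfa with hfa | hfS
        · obtain rfl := hfa.symm
          -- Y' = X
          exfalso
          apply nXY'
          apply Subtype.ext
          ext x
          have h1 := chY' x; have h2 := chY x
          clear * - h1 h2 haX hbX hne_ab
          rcases eq_or_ne x a with rfl | hxa <;> rcases eq_or_ne x b with rfl | hxb <;> tauto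
        · have hfa' : f ≠ a := fun h => hfS (h ▸ haX)
          have haf : a ≠ f := hfa'.symm
          have hfc : f ≠ c := fun h => hfS (h ▸ hcX)
          have hcf : c ≠ f := hfc.symm
          have ma : a ∈ symmDiff X'.1 Y'.1 := by
            rw [Finset.mem_symmDiff]
            have h1 := chX' a; have h2 := chY' a; have h3 := chY a
            clear * - h1 h2 h3 haX haY hac haf hne_ab
            tauto
          have mb : b ∈ symmDiff X'.1 Y'.1 := by
            rw [Finset.mem_symmDiff]
            have h1 := chX' b
            clear * - h1 heY'
            tauto
          have mc : c ∈ symmDiff X'.1 Y'.1 := by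
            rw [Finset.mem_symmDiff]
            have h1 := chX' c; have h2 := chY' c; have h3 := chY c
            clear * - h1 h2 h3 hcX hcX' hne_cb hcf hca
            tauto
          exact (no_three hX'Y' ma mb mc hne_ab hac hne_cb.symm).elim
      · -- e ∈ X, e ≠ a
        have heb : e ≠ b := fun h => hbX (h ▸ heS)
        have hae : a ≠ e := hea.symm
        rcases hfa with hfa | hfS
        · obtain rfl := hfa.symm
          -- f = a : Y' = X + b - e
          by_cases hec : e = c
          · obtain rfl := hec.symm
            -- Y' = X' : contradiction with hX'Y'.ne
            exact absurd (Subtype.ext (Finset.ext fun x => by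
              have h1 := chX' x; have h2 := chY' x; have h3 := chY x
              clear * - h1 h2 h3 haX hbX hbY hcX haY hne_ab hne_cb hca hac
              rcases eq_or_ne x a with rfl | _ <;> rcases eq_or_ne x b with rfl | _ <;>
                rcases eq_or_ne x c with rfl | _ <;> tauto)) hX'Y'.ne
          · have hce : c ≠ e := fun h => hec h.symm
            have mc : c ∈ symmDiff X'.1 Y'.1 := by
              rw [Finset.mem_symmDiff]
              have h2 := chY' c; have h3 := chY c
              clear * - h2 h3 hcX hcX' hca hce hne_cb
              tauto
            have me : e ∈ symmDiff X'.1 Y'.1 := by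
              rw [Finset.mem_symmDiff]
              have h1 := chX' e
              clear * - h1 heS heY' hec
              tauto
            have hceE : G.Adj c e := pair_of_adj hX'Y' mc me hce
            have sdXY' : symmDiff X.1 Y'.1 = {e, b} := by
              ext x
              simp only [Finset.mem_symmDiff, Finset.mem_insert, Finset.mem_singleton]
              have h2 := chY' x; have h3 := chY x
              clear * - h2 h3 haX haY hbX hbY heS hne_ab hae heb
              rcases eq_or_ne x a with rfl | _ <;> rcases eq_or_ne x b with rfl | _ <;>
                rcases eq_or_ne x e with rfl | _ <;> tauto
            have hnbe : ¬G.Adj e b := fun hg => hXY' ⟨e, b, hg, sdXY'⟩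
            exact absurd (nC4 ⟨a, b, c, e, hne_ab, hac, hae, hne_cb.symm, heb.symm, hce,
              hab, hcd.symm, hceE, hef, hnac, fun h => hnbe h.symm⟩) not_false
        · have hfa' : f ≠ a := fun h => hfS (h ▸ haX)
          have haf : a ≠ f := hfa'.symm
          have hfc : f ≠ c := fun h => hfS (h ▸ hcX)
          have hcf : c ≠ f := hfc.symm
          have hfe : f ≠ e := fun h => hfS (h ▸ heS)
          by_cases hec : e = c
          · obtain rfl := hec.symm
            -- e = c : X' ∆ Y' = {a, f}
            have ma : a ∈ symmDiff X'.1 Y'.1 := by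
              rw [Finset.mem_symmDiff]
              have h1 := chX' a; have h2 := chY' a; have h3 := chY a
              clear * - h1 h2 h3 haX haY hac haf
              tauto
            have mf : f ∈ symmDiff X'.1 Y'.1 := by
              rw [Finset.mem_symmDiff]
              have h1 := chX' f; have h2 := chY' f
              clear * - h1 h2 hfb hfc hfS
              tauto
            have hafE : G.Adj a f := pair_of_adj hX'Y' ma mf haf
            by_cases hbf : G.Adj b f
            · exact absurd (nDia ⟨b, a, f, c, hne_ab.symm, hfb.symm, hne_cb.symm, haf, hac, hfc,
                hab.symm, hbf, hcd.symm, hafE, hef.symm, hnac⟩) not_false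
            · exact absurd (nC4 ⟨a, b, c, f, hne_ab, hac, haf, hne_cb.symm, hfb.symm, hcf,
                hab, hcd.symm, hef, hafE.symm, hnac, hbf⟩) not_false
          · have hce : c ≠ e := fun h => hec h.symm
            have ma : a ∈ symmDiff X'.1 Y'.1 := by
              rw [Finset.mem_symmDiff]
              have h1 := chX' a; have h2 := chY' a; have h3 := chY a
              clear * - h1 h2 h3 haX haY hac haf hae
              tauto
            have me : e ∈ symmDiff X'.1 Y'.1 := by
              rw [Finset.mem_symmDiff]
              have h1 := chX' e
              clear * - h1 heS heY' hec
              tauto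
            have mc : c ∈ symmDiff X'.1 Y'.1 := by
              rw [Finset.mem_symmDiff]
              have h2 := chY' c; have h3 := chY c
              clear * - h2 h3 hcX hcX' hca hce hcf hne_cb
              tauto
            exact (no_three hX'Y' ma me mc hae hac hce.symm).elim
  · -- b ≠ d
    have hdb : d ≠ b := fun h => hbd h.symm
    by_cases hac : a = c
    · subst hac
      -- a = c : X' = X - a + d
      have sdX'Y : symmDiff X'.1 Y.1 = {d, b} := by
        ext x
        simp only [Finset.mem_symmDiff, Finset.mem_insert, Finset.mem_singleton]
        have h1 := chX' x; have h2 := chY x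
        clear * - h1 h2 haX haY hbX hbY hdX hne_ab hne_ad hbd hdb
        rcases eq_or_ne x a with rfl | _ <;> rcases eq_or_ne x b with rfl | _ <;>
          rcases eq_or_ne x d with rfl | _ <;> tauto
      have hndb : ¬G.Adj d b := fun hg => hX'Y ⟨d, b, hg, sdX'Y⟩
      rcases hee with heb | ⟨hea, heS⟩
      · obtain rfl := heb.symm
        rcases hfa with hfa | hfS
        · obtain rfl := hfa.symm
          exfalso
          apply nXY'
          apply Subtype.ext
          ext x
          have h1 := chY' x; have h2 := chY x
          clear * - h1 h2 haX hbX hne_ab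
          rcases eq_or_ne x a with rfl | _ <;> rcases eq_or_ne x b with rfl | _ <;> tauto
        · have hfa' : f ≠ a := fun h => hfS (h ▸ haX)
          have haf : a ≠ f := hfa'.symm
          by_cases hfd : f = d
          · obtain rfl := hfd.symm
            -- Y' = X'
            exact absurd (Subtype.ext (Finset.ext fun x => by
              have h1 := chX' x; have h2 := chY' x; have h3 := chY x
              clear * - h1 h2 h3 haX haY hbX hbY hdX hne_ab hne_ad hbd hdb
              rcases eq_or_ne x a with rfl | _ <;> rcases eq_or_ne x b with rfl | _ <;>
                rcases eq_or_ne x d with rfl | _ <;> tauto)) hX'Y'.ne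
          · have hdf : d ≠ f := fun h => hfd h.symm
            have md : d ∈ symmDiff X'.1 Y'.1 := by
              rw [Finset.mem_symmDiff]
              have h1 := chX' d; have h2 := chY' d; have h3 := chY d
              clear * - h1 h2 h3 hdX hdb hdf
              tauto
            have mf : f ∈ symmDiff X'.1 Y'.1 := by
              rw [Finset.mem_symmDiff]
              have h1 := chX' f; have h2 := chY' f
              clear * - h1 h2 hfd hfa' hfS
              tauto
            have hdfE : G.Adj d f := pair_of_adj hX'Y' md mf hdf
            have sdXY' : symmDiff X.1 Y'.1 = {a, f} := by
              ext x
              simp only [Finset.mem_symmDiff, Finset.mem_insert, Finset.mem_singleton]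
              have h2 := chY' x; have h3 := chY x
              clear * - h2 h3 haX haY hbX hbY hfS hne_ab haf
              rcases eq_or_ne x a with rfl | _ <;> rcases eq_or_ne x b with rfl | _ <;>
                rcases eq_or_ne x f with rfl | _ <;> tauto
            have hnaf : ¬G.Adj a f := fun hg => hXY' ⟨a, f, hg, sdXY'⟩
            exact absurd (nC4 ⟨a, b, f, d, hne_ab, haf, hne_ad, hfb.symm, hbd, hfd,
              hab, hef, hdfE.symm, hcd.symm, hnaf, fun h => hndb h.symm⟩) not_false
      · have heb : e ≠ b := fun h => hbX (h ▸ heS)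
        have hae : a ≠ e := hea.symm
        have hed : e ≠ d := fun h => hdX (h ▸ heS)
        rcases hfa with hfa | hfS
        · obtain rfl := hfa.symm
          -- f = a, Y' = X + b - e : three elements d, e, b
          have md : d ∈ symmDiff X'.1 Y'.1 := by
            rw [Finset.mem_symmDiff]
            have h1 := chX' d; have h2 := chY' d; have h3 := chY d
            clear * - h1 h2 h3 hdX hdb hne_ad
            tauto
          have me : e ∈ symmDiff X'.1 Y'.1 := by
            rw [Finset.mem_symmDiff]
            have h1 := chX' e
            clear * - h1 heS heY' hea
            tauto
          have mb : b ∈ symmDiff X'.1 Y'.1 := by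
            rw [Finset.mem_symmDiff]
            have h1 := chX' b; have h2 := chY' b; have h3 := chY b
            clear * - h1 h2 h3 hbX hbY hbd heb hne_ab
            tauto
          exact (no_three hX'Y' md me mb hed.symm hdb heb).elim
        · have hfa' : f ≠ a := fun h => hfS (h ▸ haX)
          have haf : a ≠ f := hfa'.symm
          by_cases hfd : f = d
          · obtain rfl := hfd.symm
            -- f = d : X' ∆ Y' = {e, b}
            have me : e ∈ symmDiff X'.1 Y'.1 := by
              rw [Finset.mem_symmDiff]
              have h1 := chX' e
              clear * - h1 heS heY' hea
              tauto
            have mb : b ∈ symmDiff X'.1 Y'.1 := by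
              rw [Finset.mem_symmDiff]
              have h1 := chX' b; have h2 := chY' b; have h3 := chY b
              clear * - h1 h2 h3 hbX hbY hbd heb hne_ab
              tauto
            have hebE : G.Adj e b := pair_of_adj hX'Y' me mb heb
            by_cases hae2 : G.Adj a e
            · exact absurd (nDia ⟨a, b, e, d, hne_ab, hae, hne_ad, heb.symm, hbd, hed,
                hab, hae2, hcd, hebE.symm, hef, fun h => hndb h.symm⟩) not_false
            · exact absurd (nC4 ⟨a, b, e, d, hne_ab, hae, hne_ad, heb.symm, hbd, hed,
                hab, hebE.symm, hef, hcd.symm, hae2, fun h => hndb h.symm⟩) not_false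
          · have hdf : d ≠ f := fun h => hfd h.symm
            have md : d ∈ symmDiff X'.1 Y'.1 := by
              rw [Finset.mem_symmDiff]
              have h1 := chX' d; have h2 := chY' d; have h3 := chY d
              clear * - h1 h2 h3 hdX hdb hdf hne_ad
              tauto
            have me : e ∈ symmDiff X'.1 Y'.1 := by
              rw [Finset.mem_symmDiff]
              have h1 := chX' e
              clear * - h1 heS heY' hea
              tauto
            have mb : b ∈ symmDiff X'.1 Y'.1 := by
              rw [Finset.mem_symmDiff]
              have h1 := chX' b; have h2 := chY' b; have h3 := chY b
              clear * - h1 h2 h3 hbX hbY hbd heb hfb hne_ab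
              tauto
            exact (no_three hX'Y' md me mb hed.symm hdb heb).elim
    · -- a ≠ c, b ≠ d : the main case
      have hca : c ≠ a := fun h => hac h.symm
      rcases hee with heb | ⟨hea, heS⟩
      · obtain rfl := heb.symm
        rcases hfa with hfa | hfS
        · obtain rfl := hfa.symm
          exfalso
          apply nXY'
          apply Subtype.ext
          ext x
          have h1 := chY' x; have h2 := chY x
          clear * - h1 h2 haX hbX hne_ab
          rcases eq_or_ne x a with rfl | _ <;> rcases eq_or_ne x b with rfl | _ <;> tauto
        · have hfa' : f ≠ a := fun h => hfS (h ▸ haX)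
          have haf : a ≠ f := hfa'.symm
          have hfc : f ≠ c := fun h => hfS (h ▸ hcX)
          have hcf : c ≠ f := hfc.symm
          by_cases hfd : f = d
          · obtain rfl := hfd.symm
            -- f = d : X' ∆ Y' = {a, c}
            have ma : a ∈ symmDiff X'.1 Y'.1 := by
              rw [Finset.mem_symmDiff]
              have h1 := chX' a; have h2 := chY' a; have h3 := chY a
              clear * - h1 h2 h3 haX haY hac hne_ab hne_ad
              tauto
            have mc : c ∈ symmDiff X'.1 Y'.1 := by
              rw [Finset.mem_symmDiff]
              have h2 := chY' c; have h3 := chY c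
              clear * - h2 h3 hcX hcX' hca hne_cb hne_cd
              tauto
            have hacE : G.Adj a c := pair_of_adj hX'Y' ma mc hac
            have sdXY' : symmDiff X.1 Y'.1 = {a, d} := by
              ext x
              simp only [Finset.mem_symmDiff, Finset.mem_insert, Finset.mem_singleton]
              have h2 := chY' x; have h3 := chY x
              clear * - h2 h3 haX haY hbX hbY hdX hne_ab hne_ad hbd hdb
              rcases eq_or_ne x a with rfl | _ <;> rcases eq_or_ne x b with rfl | _ <;>
                rcases eq_or_ne x d with rfl | _ <;> tauto
            have hnad : ¬G.Adj a d := fun hg => hXY' ⟨a, d, hg, sdXY'⟩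
            by_cases hbc : G.Adj b c
            · exact absurd (nDia ⟨b, a, c, d, hne_ab.symm, hne_cb.symm, hbd, hac, hne_ad, hne_cd,
                hab.symm, hbc, hef, hacE, hcd, hnad⟩) not_false
            · exact absurd (nC4 ⟨a, b, d, c, hne_ab, hne_ad, hac, hbd, hne_cb.symm, hne_cd.symm,
                hab, hef, hcd.symm, hacE.symm, hnad, hbc⟩) not_false
          · have hdf : d ≠ f := fun h => hfd h.symm
            have ma : a ∈ symmDiff X'.1 Y'.1 := by
              rw [Finset.mem_symmDiff]
              have h1 := chX' a; have h2 := chY' a; have h3 := chY a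
              clear * - h1 h2 h3 haX haY hac haf hne_ab
              tauto
            have md : d ∈ symmDiff X'.1 Y'.1 := by
              rw [Finset.mem_symmDiff]
              have h1 := chX' d; have h2 := chY' d; have h3 := chY d
              clear * - h1 h2 h3 hdX hdb hdf
              tauto
            have mc : c ∈ symmDiff X'.1 Y'.1 := by
              rw [Finset.mem_symmDiff]
              have h2 := chY' c; have h3 := chY c
              clear * - h2 h3 hcX hcX' hca hcf hne_cb
              tauto
            exact (no_three hX'Y' ma md mc hne_ad hac hne_cd.symm).elim
      · have heb : e ≠ b := fun h => hbX (h ▸ heS)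
        have hae : a ≠ e := hea.symm
        have hed : e ≠ d := fun h => hdX (h ▸ heS)
        rcases hfa with hfa | hfS
        · obtain rfl := hfa.symm
          -- f = a
          by_cases hec : e = c
          · obtain rfl := hec.symm
            -- e = c : X' ∆ Y' = {d, b}
            have md : d ∈ symmDiff X'.1 Y'.1 := by
              rw [Finset.mem_symmDiff]
              have h1 := chX' d; have h2 := chY' d; have h3 := chY d
              clear * - h1 h2 h3 hdX hdb hne_ad
              tauto
            have mb : b ∈ symmDiff X'.1 Y'.1 := by
              rw [Finset.mem_symmDiff]
              have h1 := chX' b; have h2 := chY' b; have h3 := chY b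
              clear * - h1 h2 h3 hbX hbY hbd hne_ab hne_cb
              tauto
            have hdbE : G.Adj d b := pair_of_adj hX'Y' md mb hdb
            have sdXY' : symmDiff X.1 Y'.1 = {c, b} := by
              ext x
              simp only [Finset.mem_symmDiff, Finset.mem_insert, Finset.mem_singleton]
              have h2 := chY' x; have h3 := chY x
              clear * - h2 h3 haX haY hbX hbY hcX hne_ab hne_cb hca hac
              rcases eq_or_ne x a with rfl | _ <;> rcases eq_or_ne x b with rfl | _ <;>
                rcases eq_or_ne x c with rfl | _ <;> tauto
            have hncb : ¬G.Adj c b := fun hg => hXY' ⟨c, b, hg, sdXY'⟩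
            by_cases had : G.Adj a d
            · exact absurd (nDia ⟨a, b, d, c, hne_ab, hne_ad, hac, hbd, hne_cb.symm, hne_cd.symm,
                hab, had, hef.symm, hdbE.symm, hcd.symm, fun h => hncb h.symm⟩) not_false
            · exact absurd (nC4 ⟨a, b, d, c, hne_ab, hne_ad, hac, hbd, hne_cb.symm, hne_cd.symm,
                hab, hdbE.symm, hcd.symm, hef, had, fun h => hncb h.symm⟩) not_false
          · have hce : c ≠ e := fun h => hec h.symm
            have md : d ∈ symmDiff X'.1 Y'.1 := by
              rw [Finset.mem_symmDiff]
              have h1 := chX' d; have h2 := chY' d; have h3 := chY d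
              clear * - h1 h2 h3 hdX hdb hne_ad hed
              tauto
            have me : e ∈ symmDiff X'.1 Y'.1 := by
              rw [Finset.mem_symmDiff]
              have h1 := chX' e
              clear * - h1 heS heY' hec
              tauto
            have mb : b ∈ symmDiff X'.1 Y'.1 := by
              rw [Finset.mem_symmDiff]
              have h1 := chX' b; have h2 := chY' b; have h3 := chY b
              clear * - h1 h2 h3 hbX hbY hbd heb hne_ab
              tauto
            exact (no_three hX'Y' md me mb hed.symm hdb heb).elim
        · have hfa' : f ≠ a := fun h => hfS (h ▸ haX)
          have haf : a ≠ f := hfa'.symm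
          have hfc : f ≠ c := fun h => hfS (h ▸ hcX)
          have hcf : c ≠ f := hfc.symm
          have hfe : f ≠ e := fun h => hfS (h ▸ heS)
          by_cases hec : e = c
          · obtain rfl := hec.symm
            by_cases hfd : f = d
            · obtain rfl := hfd.symm
              -- THE GOOD LEAF : X' ∆ Y' = {a, b}
              have key : symmDiff X'.1 Y'.1 = {a, b} := by
                ext x
                simp only [Finset.mem_symmDiff, Finset.mem_insert, Finset.mem_singleton]
                have h1 := chX' x; have h2 := chY' x; have h3 := chY x
                clear * - h1 h2 h3 haX hbX hcX hdX haY hbY hne_ab hne_cd hne_ad hne_cb hac hca hbd hdb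
                rcases eq_or_ne x a with rfl | _ <;> rcases eq_or_ne x b with rfl | _ <;>
                  rcases eq_or_ne x c with rfl | _ <;> rcases eq_or_ne x d with rfl | _ <;> tauto
              rw [sd1, key]
            · have hdf : d ≠ f := fun h => hfd h.symm
              have ma : a ∈ symmDiff X'.1 Y'.1 := by
                rw [Finset.mem_symmDiff]
                have h1 := chX' a; have h2 := chY' a; have h3 := chY a
                clear * - h1 h2 h3 haX haY hac haf
                tauto
              have md : d ∈ symmDiff X'.1 Y'.1 := by
                rw [Finset.mem_symmDiff]
                have h1 := chX' d; have h2 := chY' d; have h3 := chY d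
                clear * - h1 h2 h3 hdX hdb hdf hne_cd
                tauto
              have mb : b ∈ symmDiff X'.1 Y'.1 := by
                rw [Finset.mem_symmDiff]
                have h1 := chX' b; have h2 := chY' b; have h3 := chY b
                clear * - h1 h2 h3 hbX hbY hbd hfb hne_ab hne_cb
                tauto
              exact (no_three hX'Y' ma md mb hne_ad hne_ab hdb).elim
          · have hce : c ≠ e := fun h => hec h.symm
            by_cases hfd : f = d
            · obtain rfl := hfd.symm
              have ma : a ∈ symmDiff X'.1 Y'.1 := by
                rw [Finset.mem_symmDiff]
                have h1 := chX' a; have h2 := chY' a; have h3 := chY a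
                clear * - h1 h2 h3 haX haY hac hae hne_ad
                tauto
              have me : e ∈ symmDiff X'.1 Y'.1 := by
                rw [Finset.mem_symmDiff]
                have h1 := chX' e
                clear * - h1 heS heY' hec
                tauto
              have mc : c ∈ symmDiff X'.1 Y'.1 := by
                rw [Finset.mem_symmDiff]
                have h2 := chY' c; have h3 := chY c
                clear * - h2 h3 hcX hcX' hca hce hne_cd hne_cb
                tauto
              exact (no_three hX'Y' ma me mc hae hac hce.symm).elim
            · have hdf : d ≠ f := fun h => hfd h.symm
              have me : e ∈ symmDiff X'.1 Y'.1 := by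
                rw [Finset.mem_symmDiff]
                have h1 := chX' e
                clear * - h1 heS heY' hec
                tauto
              have mc : c ∈ symmDiff X'.1 Y'.1 := by
                rw [Finset.mem_symmDiff]
                have h2 := chY' c; have h3 := chY c
                clear * - h2 h3 hcX hcX' hca hce hcf hne_cb
                tauto
              have mf : f ∈ symmDiff X'.1 Y'.1 := by
                rw [Finset.mem_symmDiff]
                have h1 := chX' f; have h2 := chY' f
                clear * - h1 h2 hfd hfc hfS
                tauto
              exact (no_three hX'Y' me mc mf hec hef.ne hcf).elim

end ladderHelpers

/-- in the k-token graph of a (C4,diamond)-free graph, two edges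
connected by a ladder have the same symmetric difference, i.e. they correspond
to moving a token along the same edge of G. -/
theorem ladder_class_same_edge {V : Type*} [Fintype V] [DecidableEq V]
    (G : SimpleGraph V) (hG : C4DiamondFree G) (n k : ℕ)
    (hn : Fintype.card V = n) (hk1 : 1 ≤ k) (hk2 : k ≤ n - 1)
    (A B A' B' : {s : Finset V // s.card = k})
    (hAB : (tokenGraph G k).Adj A B) (hAB' : (tokenGraph G k).Adj A' B')
    (hladder : ConnectedByLadder (tokenGraph G k) A B A' B') :
    symmDiff A.1 B.1 = symmDiff A'.1 B'.1 := by
  rcases hladder with hpair | ⟨m, u, v, hm, ⟨hu, hv, huv, huu, hvv, hrung⟩, hstart, hend⟩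
  · rw [Set.ext_iff] at hpair
    have h1 : A = A' ∨ A = B' := by
      have := (hpair A).mp (by simp)
      simpa using this
    have h2 : B = A' ∨ B = B' := by
      have := (hpair B).mp (by simp)
      simpa using this
    have hne : A ≠ B := hAB.ne
    rcases h1 with rfl | rfl <;> rcases h2 with rfl | rfl
    · exact absurd rfl hne
    · rfl
    · rw [symmDiff_comm]
    · exact absurd rfl hne
  · have key : ∀ i : ℕ, ∀ h : i ≤ m,
        symmDiff (u ⟨i, by omega⟩).1 (v ⟨i, by omega⟩).1
          = symmDiff (u 0).1 (v 0).1 := by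
      intro i
      induction i with
      | zero =>
        intro _
        have h0 : (⟨0, by omega⟩ : Fin (m + 1)) = 0 := rfl
        rw [h0]
      | succ i ih =>
        intro h
        have hi : i ≤ m := by omega
        set I : Fin (m + 1) := ⟨i, by omega⟩ with hI
        set J : Fin (m + 1) := ⟨i + 1, by omega⟩ with hJ
        have hIJ : (I : ℕ) + 1 = (J : ℕ) := rfl
        have hInJ : I ≠ J := by
          intro hEq
          have : (I : ℕ) = (J : ℕ) := congrArg Fin.val hEq
          omega
        have hJnI : J ≠ I := hInJ.symm
        have hXY : (tokenGraph G k).Adj (u I) (v I) := (hrung I I).mpr rfl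
        have hXX' : (tokenGraph G k).Adj (u I) (u J) := (huu I J).mpr (Or.inl hIJ)
        have hYY' : (tokenGraph G k).Adj (v I) (v J) := (hvv I J).mpr (Or.inl hIJ)
        have hX'Y' : (tokenGraph G k).Adj (u J) (v J) := (hrung J J).mpr rfl
        have hXY' : ¬(tokenGraph G k).Adj (u I) (v J) :=
          fun hadj => hInJ ((hrung I J).mp hadj)
        have hX'Y : ¬(tokenGraph G k).Adj (u J) (v I) :=
          fun hadj => hJnI ((hrung J I).mp hadj)
        have hsq := square hG (u I) (v I) (u J) (v J) hXY hXX' hYY' hX'Y' hXY' hX'Y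
          (huv I J) (huv J I)
        exact hsq.symm.trans (ih hi)
    have hlast : Fin.last m = (⟨m, by omega⟩ : Fin (m + 1)) := rfl
    have hKey := key m le_rfl
    rw [← hlast] at hKey
    have hstart' : symmDiff (u 0).1 (v 0).1 = symmDiff A.1 B.1 := by
      rcases hstart with ⟨rfl, rfl⟩ | ⟨rfl, rfl⟩
      · rfl
      · rw [symmDiff_comm]
    have hend' : symmDiff (u (Fin.last m)).1 (v (Fin.last m)).1
        = symmDiff A'.1 B'.1 := by
      rcases hend with ⟨rfl, rfl⟩ | ⟨rfl, rfl⟩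
      · rfl
      · rw [symmDiff_comm]
    rw [← hstart', ← hend', hKey]
end

section
/- Let G be a (C4,diamond)-free graph and e = ab an edge of G such that G ∖ {a,b} is connected. Then any two edges of F_k(G) corresponding to moving a token along e (i.e., edges A₁B₁ and A₂B₂ with A₁ △ B₁ = A₂ △ B₂ = {a,b}) are connected by a ladder in F_k(G). -/
open Finset

section TokenAux

variable {V : Type*} [DecidableEq V]

/-- A single token move in `G` avoiding the vertices `a` and `b`. -/
def TStep (G : SimpleGraph V) (a b : V) (S T : Finset V) : Prop :=
  ∃ x y, x ∈ S ∧ y ∉ S ∧ G.Adj x y ∧ x ≠ a ∧ x ≠ b ∧ y ≠ a ∧ y ≠ b ∧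
    T = insert y (S.erase x)

variable {G : SimpleGraph V} {a b : V} {S T : Finset V}

lemma TStep.card_eq (h : TStep G a b S T) : T.card = S.card := by
  obtain ⟨x, y, hx, hy, -, -, -, -, -, rfl⟩ := h
  rw [Finset.card_insert_of_notMem (fun hc => hy (Finset.mem_of_mem_erase hc)),
    Finset.card_erase_of_mem hx]
  have := Finset.card_pos.mpr ⟨x, hx⟩
  omega

lemma TStep.good (h : TStep G a b S T) (ha : a ∉ S) (hb : b ∉ S) :
    a ∉ T ∧ b ∉ T := by
  obtain ⟨x, y, hx, hy, -, -, -, hya, hyb, rfl⟩ := h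
  constructor <;> intro hc <;> rw [Finset.mem_insert] at hc
  · rcases hc with hc | hc
    · exact hya hc.symm
    · exact ha (Finset.mem_of_mem_erase hc)
  · rcases hc with hc | hc
    · exact hyb hc.symm
    · exact hb (Finset.mem_of_mem_erase hc)

lemma TStep.ne (h : TStep G a b S T) : S ≠ T := by
  obtain ⟨x, y, hx, hy, -, -, -, -, -, rfl⟩ := h
  intro hc
  exact hy (hc ▸ Finset.mem_insert_self y _)

lemma TStep.symmDiff_eq (h : TStep G a b S T) :
    ∃ x y, G.Adj x y ∧ symmDiff S T = {x, y} := by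
  obtain ⟨x, y, hx, hy, hadj, -, -, -, -, rfl⟩ := h
  refine ⟨x, y, hadj, ?_⟩
  have hxy : x ≠ y := fun hc => hy (hc ▸ hx)
  ext z
  simp only [Finset.mem_symmDiff, Finset.mem_insert, Finset.mem_erase,
    Finset.mem_singleton]
  by_cases hzx : z = x <;> by_cases hzy : z = y <;> subst_eqs <;> tauto

lemma tstep_of_adj (hcard : S.card = T.card) (haS : a ∉ S) (hbS : b ∉ S)
    (haT : a ∉ T) (hbT : b ∉ T)
    (h : ∃ x y, G.Adj x y ∧ symmDiff S T = {x, y}) : TStep G a b S T := by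
  obtain ⟨x, y, hadj, hd⟩ := h
  have hxy : x ≠ y := hadj.ne
  have hcd : (S \ T).card = (T \ S).card := Finset.card_sdiff_comm hcard
  have hunion : S \ T ∪ T \ S = {x, y} := by
    rw [← hd]; ext z; simp only [Finset.mem_symmDiff, Finset.mem_union, Finset.mem_sdiff]
  have hdisj : Disjoint (S \ T) (T \ S) :=
    disjoint_sdiff_sdiff
  have hcards : (S \ T).card + (T \ S).card = 2 := by
    rw [← Finset.card_union_of_disjoint hdisj, hunion, Finset.card_insert_of_notMem
      (by simpa using hxy), Finset.card_singleton]
  have h1 : (S \ T).card = 1 := by omega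
  have h2 : (T \ S).card = 1 := by omega
  obtain ⟨p, hp⟩ := Finset.card_eq_one.mp h1
  obtain ⟨q, hq⟩ := Finset.card_eq_one.mp h2
  have hpS : p ∈ S ∧ p ∉ T := by
    have : p ∈ S \ T := hp ▸ Finset.mem_singleton_self p
    exact Finset.mem_sdiff.mp this
  have hqT : q ∈ T ∧ q ∉ S := by
    have : q ∈ T \ S := hq ▸ Finset.mem_singleton_self q
    exact Finset.mem_sdiff.mp this
  have hpq : p ≠ q := fun hc => hqT.2 (hc ▸ hpS.1)
  have hmem : p ∈ ({x, y} : Finset V) ∧ q ∈ ({x, y} : Finset V) := by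
    constructor
    · rw [← hunion]; exact Finset.mem_union_left _ (hp ▸ Finset.mem_singleton_self p)
    · rw [← hunion]; exact Finset.mem_union_right _ (hq ▸ Finset.mem_singleton_self q)
  have hadjpq : G.Adj p q := by
    rcases Finset.mem_insert.mp hmem.1 with h | h <;>
    rcases Finset.mem_insert.mp hmem.2 with h' | h' <;>
    simp only [Finset.mem_singleton, Finset.mem_insert] at * <;> subst_eqs <;>
      first | exact hadj | exact hadj.symm | exact absurd rfl hpq
  refine ⟨p, q, hpS.1, hqT.2, hadjpq, fun hc => haS (hc ▸ hpS.1),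
    fun hc => hbS (hc ▸ hpS.1), fun hc => haT (hc ▸ hqT.1),
    fun hc => hbT (hc ▸ hqT.1), ?_⟩
  ext z
  simp only [Finset.mem_insert, Finset.mem_erase]
  constructor
  · intro hz
    by_cases hzq : z = q
    · exact Or.inl hzq
    · refine Or.inr ⟨fun hc => hpS.2 (hc ▸ hz), ?_⟩
      by_contra hzS
      have : z ∈ T \ S := Finset.mem_sdiff.mpr ⟨hz, hzS⟩
      rw [hq, Finset.mem_singleton] at this
      exact hzq this
  · rintro (rfl | ⟨hzp, hzS⟩)
    · exact hqT.1
    · by_contra hzT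
      have : z ∈ S \ T := Finset.mem_sdiff.mpr ⟨hzS, hzT⟩
      rw [hp, Finset.mem_singleton] at this
      exact hzp this

/-- Chains of token steps: existence statement. -/
def TChain (G : SimpleGraph V) (a b : V) (S T : Finset V) (m : ℕ)
    (f : ℕ → Finset V) : Prop :=
  f 0 = S ∧ f m = T ∧ ∀ i < m, TStep G a b (f i) (f (i + 1))

lemma tchain_invariant {m : ℕ} {f : ℕ → Finset V}
    (hc : TChain G a b S T m f) (ha : a ∉ S) (hb : b ∉ S) :
    ∀ i ≤ m, a ∉ f i ∧ b ∉ f i ∧ (f i).card = S.card := by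
  intro i hi
  induction i with
  | zero => exact ⟨hc.1 ▸ ha, hc.1 ▸ hb, by rw [hc.1]⟩
  | succ j ihj =>
    have hj := ihj (by omega)
    have hstep := hc.2.2 j (by omega)
    obtain ⟨h1, h2⟩ := hstep.good hj.1 hj.2.1
    exact ⟨h1, h2, hstep.card_eq.trans hj.2.2⟩

lemma tchain_trans {m₁ m₂ : ℕ} {f₁ f₂ : ℕ → Finset V} {U : Finset V}
    (h1 : TChain G a b S T m₁ f₁) (h2 : TChain G a b T U m₂ f₂) :
    ∃ f, TChain G a b S U (m₁ + m₂) f := by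
  refine ⟨fun t => if t ≤ m₁ then f₁ t else f₂ (t - m₁), ?_, ?_, ?_⟩
  · simp [h1.1]
  · beta_reduce
    by_cases h : m₂ = 0
    · subst h
      simp only [Nat.add_zero, le_refl, if_pos]
      rw [h1.2.1, ← h2.1, h2.2.1]
    · rw [if_neg (by omega)]
      have : m₁ + m₂ - m₁ = m₂ := by omega
      rw [this, h2.2.1]
  · intro i hi
    beta_reduce
    rcases lt_trichotomy i m₁ with h | h | h
    · rw [if_pos (by omega)]
      by_cases h' : i + 1 ≤ m₁
      · rw [if_pos h']
        exact h1.2.2 i h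
      · have : i + 1 = m₁ := by omega
        omega
    · subst h
      rw [if_pos le_rfl, if_neg (by omega), h1.2.1, ← h2.1]
      have : i + 1 - i = 1 := by omega
      rw [this]
      exact h2.2.2 0 (by omega)
    · rw [if_neg (by omega), if_neg (by omega)]
      have he : i + 1 - m₁ = (i - m₁) + 1 := by omega
      rw [he]
      exact h2.2.2 (i - m₁) (by omega)

lemma tchain_single (h : TStep G a b S T) :
    TChain G a b S T 1 (fun t => if t = 0 then S else T) := by
  refine ⟨rfl, by norm_num, fun i hi => ?_⟩
  interval_cases i
  simpa using h

end TokenAux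

section Slide

variable {V : Type*} [DecidableEq V] {G : SimpleGraph V} {a b : V}

lemma tchain_slide :
    ∀ {u v : {v : V | v ≠ a ∧ v ≠ b}}
      (p : (G.induce {v : V | v ≠ a ∧ v ≠ b}).Walk u v), p.IsPath →
    ∀ S : Finset V, u.1 ∈ S → v.1 ∉ S →
    ∃ m f, TChain G a b S (insert v.1 (S.erase u.1)) m f := by
  intro u v p
  induction p with
  | nil =>
    intro _ S hu hv
    exact absurd hu hv
  | @cons u w v h q ih =>
    intro hp S hu hv
    rw [SimpleGraph.Walk.cons_isPath_iff] at hp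
    have hadj : G.Adj u.1 w.1 := by
      simpa using h
    have huv : u.1 ≠ v.1 := fun hc => hv (hc ▸ hu)
    by_cases hwS : w.1 ∈ S
    · -- first move the token at w to v, then move u's token to w
      have hwv : w.1 ≠ v.1 := fun hc => hv (hc ▸ hwS)
      obtain ⟨m, f, hf⟩ := ih hp.1 S hwS hv
      have huw : u ≠ w := fun hc => hp.2 (hc ▸ q.start_mem_support)
      have huw' : u.1 ≠ w.1 := fun hc => huw (Subtype.ext hc)
      set S' := insert v.1 (S.erase w.1) with hS'
      have hstep : TStep G a b S' (insert w.1 (S'.erase u.1)) := by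
        refine ⟨u.1, w.1, ?_, ?_, hadj, u.2.1, u.2.2, w.2.1, w.2.2, rfl⟩
        · exact Finset.mem_insert_of_mem (Finset.mem_erase.mpr ⟨huw', hu⟩)
        · intro hc
          rcases Finset.mem_insert.mp hc with hc | hc
          · exact hwv hc
          · exact (Finset.mem_erase.mp hc).1 rfl
      have heq : insert w.1 (S'.erase u.1) = insert v.1 (S.erase u.1) := by
        ext z
        simp only [hS', Finset.mem_insert, Finset.mem_erase]
        constructor
        · rintro (rfl | ⟨hzu, (rfl | ⟨hzw, hzS⟩)⟩)
          · exact Or.inr ⟨fun hc => huw' hc.symm, hwS⟩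
          · exact Or.inl rfl
          · exact Or.inr ⟨hzu, hzS⟩
        · rintro (rfl | ⟨hzu, hzS⟩)
          · exact Or.inr ⟨fun hc => huv hc.symm, Or.inl rfl⟩
          · by_cases hzw : z = w.1
            · exact Or.inl hzw
            · exact Or.inr ⟨hzu, Or.inr ⟨hzw, hzS⟩⟩
      obtain ⟨g, hg⟩ := tchain_trans hf (heq ▸ tchain_single hstep)
      exact ⟨m + 1, g, hg⟩
    · -- move u's token to w first
      set S' := insert w.1 (S.erase u.1) with hS'
      have hstep : TStep G a b S S' :=
        ⟨u.1, w.1, hu, hwS, hadj, u.2.1, u.2.2, w.2.1, w.2.2, rfl⟩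
      by_cases hwv : w = v
      · subst hwv
        exact ⟨1, _, tchain_single hstep⟩
      · have hwv' : w.1 ≠ v.1 := fun hc => hwv (Subtype.ext hc)
        have hvS' : v.1 ∉ S' := by
          intro hc
          rcases Finset.mem_insert.mp hc with hc | hc
          · exact hwv' hc.symm
          · exact hv (Finset.mem_of_mem_erase hc)
        have hwS' : w.1 ∈ S' := Finset.mem_insert_self _ _
        obtain ⟨m, f, hf⟩ := ih hp.1 S' hwS' hvS'
        have heq : insert v.1 (S'.erase w.1) = insert v.1 (S.erase u.1) := by
          rw [hS', Finset.erase_insert]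
          intro hc
          exact hwS (Finset.mem_of_mem_erase hc)
        obtain ⟨g, hg⟩ := tchain_trans (tchain_single hstep) (heq ▸ hf)
        exact ⟨1 + m, g, hg⟩

end Slide

section Connect

variable {V : Type*} [DecidableEq V] {G : SimpleGraph V} {a b : V}

lemma tchain_connect (hconn : (G.induce {v : V | v ≠ a ∧ v ≠ b}).Connected) :
    ∀ (N : ℕ) (S T : Finset V), (S \ T).card ≤ N →
    (∀ s ∈ S, s ≠ a ∧ s ≠ b) → (∀ s ∈ T, s ≠ a ∧ s ≠ b) →
    S.card = T.card → ∃ m f, TChain G a b S T m f := by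
  intro N
  induction N with
  | zero =>
    intro S T hN hS hT hcard
    have hsub : S ⊆ T := by
      have : S \ T = ∅ := Finset.card_eq_zero.mp (by omega)
      rwa [Finset.sdiff_eq_empty_iff_subset] at this
    have : S = T := Finset.eq_of_subset_of_card_le hsub (le_of_eq hcard.symm)
    exact ⟨0, fun _ => S, rfl, this ▸ rfl, fun i hi => by omega⟩
  | succ N ihN =>
    intro S T hN hS hT hcard
    by_cases hST : S = T
    · exact ⟨0, fun _ => S, rfl, hST ▸ rfl, fun i hi => by omega⟩
    · have hSd : (S \ T).Nonempty := by
        rw [Finset.sdiff_nonempty]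
        intro hsub
        exact hST (Finset.eq_of_subset_of_card_le hsub (le_of_eq hcard.symm))
      have hTd : (T \ S).Nonempty := by
        rw [← Finset.card_pos, ← Finset.card_sdiff_comm hcard, Finset.card_pos]
        exact hSd
      obtain ⟨u, hu⟩ := hSd
      obtain ⟨v, hv⟩ := hTd
      rw [Finset.mem_sdiff] at hu hv
      have hu' : u ≠ a ∧ u ≠ b := hS u hu.1
      have hv' : v ≠ a ∧ v ≠ b := hT v hv.1
      have hreach := hconn.preconnected ⟨u, hu'⟩ ⟨v, hv'⟩
      obtain ⟨p⟩ := hreach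
      obtain ⟨m₁, f₁, hf₁⟩ := tchain_slide (u := ⟨u, hu'⟩) (v := ⟨v, hv'⟩) (p.toPath : _).1 (p.toPath : _).2 S hu.1 hv.2
      set S' := insert v (S.erase u) with hS'
      have hS'good : ∀ s ∈ S', s ≠ a ∧ s ≠ b := by
        intro s hs
        rcases Finset.mem_insert.mp hs with rfl | hs
        · exact hv'
        · exact hS s (Finset.mem_of_mem_erase hs)
      have hS'card : S'.card = T.card := by
        rw [hS', Finset.card_insert_of_notMem
          (fun hc => hv.2 (Finset.mem_of_mem_erase hc)),
          Finset.card_erase_of_mem hu.1]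
        have := Finset.card_pos.mpr ⟨u, hu.1⟩
        omega
      have hS'N : (S' \ T).card ≤ N := by
        have heq : S' \ T = (S \ T).erase u := by
          ext z
          simp only [hS', Finset.mem_sdiff, Finset.mem_insert, Finset.mem_erase]
          constructor
          · rintro ⟨rfl | ⟨hzu, hzS⟩, hzT⟩
            · exact absurd hv.1 hzT
            · exact ⟨hzu, hzS, hzT⟩
          · rintro ⟨hzu, hzS, hzT⟩
            exact ⟨Or.inr ⟨hzu, hzS⟩, hzT⟩
        rw [heq, Finset.card_erase_of_mem (Finset.mem_sdiff.mpr hu)]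
        omega
      obtain ⟨m₂, f₂, hf₂⟩ := ihN S' T hS'N hS'good hT hS'card
      obtain ⟨g, hg⟩ := tchain_trans hf₁ hf₂
      exact ⟨m₁ + m₂, g, hg⟩

end Connect

section Minimal

variable {V : Type*} [DecidableEq V] {G : SimpleGraph V} {a b : V}
  {S T : Finset V}

lemma tchain_minimal (hex : ∃ m, ∃ f, TChain G a b S T m f) :
    ∃ m f, TChain G a b S T m f ∧
      (∀ i j, i < j → j ≤ m → f i ≠ f j) ∧
      (∀ i j, i + 1 < j → j ≤ m → ¬TStep G a b (f i) (f j)) := by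
  have hex' : ∃ m, ∃ f, TChain G a b S T m f := hex
  classical
  set m := Nat.find hex' with hm
  obtain ⟨f, hf⟩ := Nat.find_spec hex'
  have hmin : ∀ m' < m, ¬∃ f, TChain G a b S T m' f :=
    fun m' h => Nat.find_min hex' h
  refine ⟨m, f, hf, ?_, ?_⟩
  · intro i j hij hjm hc
    -- shortcut: delete the segment between i and j
    refine hmin (m - (j - i)) (by omega) ⟨fun t => if t ≤ i then f t
      else f (t + (j - i)), ?_, ?_, ?_⟩
    · simp only [if_pos (Nat.zero_le i)]
      exact hf.1
    · beta_reduce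
      by_cases h : m - (j - i) ≤ i
      · have hji : j = m := by omega
        have him : m - (j - i) = i := by omega
        rw [if_pos h, him, hc, hji]
        exact hf.2.1
      · rw [if_neg h]
        have : m - (j - i) + (j - i) = m := by omega
        rw [this]
        exact hf.2.1
    · intro t ht
      beta_reduce
      rcases lt_trichotomy t i with h | h | h
      · rw [if_pos (by omega), if_pos (by omega)]
        exact hf.2.2 t (by omega)
      · subst h
        rw [if_pos le_rfl, if_neg (by omega), hc]
        have : t + 1 + (j - t) = j + 1 := by omega
        rw [this]
        exact hf.2.2 j (by omega)
      · rw [if_neg (by omega), if_neg (by omega)]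
        have : t + 1 + (j - i) = (t + (j - i)) + 1 := by omega
        rw [this]
        exact hf.2.2 (t + (j - i)) (by omega)
  · intro i j hij hjm hc
    refine hmin (m - (j - i - 1)) (by omega) ⟨fun t => if t ≤ i then f t
      else f (t + (j - i - 1)), ?_, ?_, ?_⟩
    · simp only [if_pos (Nat.zero_le i)]
      exact hf.1
    · beta_reduce
      rw [if_neg (by omega)]
      have : m - (j - i - 1) + (j - i - 1) = m := by omega
      rw [this]
      exact hf.2.1
    · intro t ht
      beta_reduce
      rcases lt_trichotomy t i with h | h | h
      · rw [if_pos (by omega), if_pos (by omega)]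
        exact hf.2.2 t (by omega)
      · subst h
        rw [if_pos le_rfl, if_neg (by omega)]
        have : t + 1 + (j - t - 1) = j := by omega
        rw [this]
        exact hc
      · rw [if_neg (by omega), if_neg (by omega)]
        have : t + 1 + (j - i - 1) = (t + (j - i - 1)) + 1 := by omega
        rw [this]
        exact hf.2.2 (t + (j - i - 1)) (by omega)

end Minimal

section SymmDiffAux

variable {V : Type*} [DecidableEq V] {a b : V} {S T : Finset V}

lemma symmDiff_insert_same (hS : a ∉ S) (hT : a ∉ T) :
    symmDiff (insert a S) (insert a T) = symmDiff S T := by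
  ext z
  simp only [Finset.mem_symmDiff, Finset.mem_insert]
  by_cases hz : z = a <;> subst_eqs <;> simp_all <;> tauto

lemma symmDiff_insert_ne (hne : a ≠ b) (haS : a ∉ S) (haT : a ∉ T)
    (hbS : b ∉ S) (hbT : b ∉ T) :
    symmDiff (insert a S) (insert b T) = insert a (insert b (symmDiff S T)) := by
  ext z
  simp only [Finset.mem_symmDiff, Finset.mem_insert]
  by_cases hza : z = a <;> by_cases hzb : z = b <;> subst_eqs <;>
    simp_all <;> tauto

lemma decomp {A B : Finset V} {k : ℕ} (hA : A.card = k) (hB : B.card = k)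
    (hne : a ≠ b) (h : symmDiff A B = {a, b}) :
    a ∉ A ∩ B ∧ b ∉ A ∩ B ∧ (A ∩ B).card = k - 1 ∧ 1 ≤ k ∧
      ((A = insert a (A ∩ B) ∧ B = insert b (A ∩ B)) ∨
       (A = insert b (A ∩ B) ∧ B = insert a (A ∩ B))) := by
  have hcd : (A \ B).card = (B \ A).card :=
    Finset.card_sdiff_comm (hA.trans hB.symm)
  have hunion : A \ B ∪ B \ A = ({a, b} : Finset V) := by
    rw [← h]; ext z
    simp only [Finset.mem_symmDiff, Finset.mem_union, Finset.mem_sdiff]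
  have hdisj : Disjoint (A \ B) (B \ A) := disjoint_sdiff_sdiff
  have hcards : (A \ B).card + (B \ A).card = 2 := by
    rw [← Finset.card_union_of_disjoint hdisj, hunion,
      Finset.card_insert_of_notMem (by simpa using hne), Finset.card_singleton]
  obtain ⟨p, hp⟩ := Finset.card_eq_one.mp (show (A \ B).card = 1 by omega)
  obtain ⟨q, hq⟩ := Finset.card_eq_one.mp (show (B \ A).card = 1 by omega)
  have hpAB : p ∈ A ∧ p ∉ B :=
    Finset.mem_sdiff.mp (hp ▸ Finset.mem_singleton_self p)
  have hqBA : q ∈ B ∧ q ∉ A :=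
    Finset.mem_sdiff.mp (hq ▸ Finset.mem_singleton_self q)
  have hpq : p ≠ q := fun hc => hqBA.2 (hc ▸ hpAB.1)
  have hpmem : p ∈ ({a, b} : Finset V) := by
    rw [← hunion]; exact Finset.mem_union_left _ (hp ▸ Finset.mem_singleton_self p)
  have hqmem : q ∈ ({a, b} : Finset V) := by
    rw [← hunion]; exact Finset.mem_union_right _ (hq ▸ Finset.mem_singleton_self q)
  have haAB : a ∉ A ∩ B := by
    intro hc
    rw [Finset.mem_inter] at hc
    have : a ∈ symmDiff A B := h ▸ Finset.mem_insert_self a {b}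
    rw [Finset.mem_symmDiff] at this
    tauto
  have hbAB : b ∉ A ∩ B := by
    intro hc
    rw [Finset.mem_inter] at hc
    have : b ∈ symmDiff A B := h ▸ Finset.mem_insert_of_mem (Finset.mem_singleton_self b)
    rw [Finset.mem_symmDiff] at this
    tauto
  have hAeq : A = insert p (A ∩ B) := by
    ext z
    simp only [Finset.mem_insert, Finset.mem_inter]
    constructor
    · intro hz
      by_cases hzB : z ∈ B
      · exact Or.inr ⟨hz, hzB⟩
      · left
        have : z ∈ A \ B := Finset.mem_sdiff.mpr ⟨hz, hzB⟩
        rwa [hp, Finset.mem_singleton] at this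
    · rintro (rfl | ⟨hz, -⟩)
      · exact hpAB.1
      · exact hz
  have hBeq : B = insert q (A ∩ B) := by
    ext z
    simp only [Finset.mem_insert, Finset.mem_inter]
    constructor
    · intro hz
      by_cases hzA : z ∈ A
      · exact Or.inr ⟨hzA, hz⟩
      · left
        have : z ∈ B \ A := Finset.mem_sdiff.mpr ⟨hz, hzA⟩
        rwa [hq, Finset.mem_singleton] at this
    · rintro (rfl | ⟨-, hz⟩)
      · exact hqBA.1
      · exact hz
  have hpAB' : p ∉ A ∩ B := fun hc => hpAB.2 (Finset.mem_inter.mp hc).2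
  have hcard : (A ∩ B).card = k - 1 ∧ 1 ≤ k := by
    have : A.card = (A ∩ B).card + 1 := by
      rw [hAeq, Finset.card_insert_of_notMem hpAB']
      rw [← hAeq]
    omega
  refine ⟨haAB, hbAB, hcard.1, hcard.2, ?_⟩
  rw [Finset.mem_insert, Finset.mem_singleton] at hpmem hqmem
  rcases hpmem with rfl | rfl <;> rcases hqmem with rfl | rfl
  · exact absurd rfl hpq
  · exact Or.inl ⟨hAeq, hBeq⟩
  · exact Or.inr ⟨hAeq, hBeq⟩
  · exact absurd rfl hpq

end SymmDiffAux


lemma tokenGraph_adj {V : Type*} [DecidableEq V] {G : SimpleGraph V} {k : ℕ}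
    (A B : {s : Finset V // s.card = k}) :
    (tokenGraph G k).Adj A B ↔ ∃ x y, G.Adj x y ∧ symmDiff A.1 B.1 = {x, y} :=
  Iff.rfl

/-- if G is (C4,diamond)-free, ab an edge of G with G∖{a,b}
connected, then any two edges of F_k(G) corresponding to moving a token along
ab are connected by a ladder. -/
theorem edges_along_edge_connected_by_ladder
    {V : Type*} [Fintype V] [DecidableEq V]
    (G : SimpleGraph V) (hG : C4DiamondFree G) (n k : ℕ)
    (hn : Fintype.card V = n) (hk1 : 1 ≤ k) (hk2 : k ≤ n - 1)
    (a b : V) (hab : G.Adj a b)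
    (hconn : (G.induce {v : V | v ≠ a ∧ v ≠ b}).Connected)
    (A₁ B₁ A₂ B₂ : {s : Finset V // s.card = k})
    (h₁ : symmDiff A₁.1 B₁.1 = {a, b})
    (h₂ : symmDiff A₂.1 B₂.1 = {a, b}) :
    ConnectedByLadder (tokenGraph G k) A₁ B₁ A₂ B₂ := by
  classical
  have hne : a ≠ b := hab.ne
  obtain ⟨ha1, hb1, hc1, hk1', hor1⟩ := decomp A₁.2 B₁.2 hne h₁
  obtain ⟨ha2, hb2, hc2, hk2', hor2⟩ := decomp A₂.2 B₂.2 hne h₂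
  set S₁ := A₁.1 ∩ B₁.1 with hS₁def
  set S₂ := A₂.1 ∩ B₂.1 with hS₂def
  by_cases hS : S₁ = S₂
  · -- the two rungs coincide
    left
    rcases hor1 with ⟨hA1, hB1⟩ | ⟨hA1, hB1⟩ <;>
      rcases hor2 with ⟨hA2, hB2⟩ | ⟨hA2, hB2⟩
    · have e1 : A₁ = A₂ := Subtype.ext (hA1.trans (hS ▸ hA2.symm))
      have e2 : B₁ = B₂ := Subtype.ext (hB1.trans (hS ▸ hB2.symm))
      rw [e1, e2]
    · have e1 : A₁ = B₂ := Subtype.ext (hA1.trans (hS ▸ hB2.symm))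
      have e2 : B₁ = A₂ := Subtype.ext (hB1.trans (hS ▸ hA2.symm))
      rw [e1, e2, Set.pair_comm]
    · have e1 : A₁ = B₂ := Subtype.ext (hA1.trans (hS ▸ hB2.symm))
      have e2 : B₁ = A₂ := Subtype.ext (hB1.trans (hS ▸ hA2.symm))
      rw [e1, e2, Set.pair_comm]
    · have e1 : A₁ = A₂ := Subtype.ext (hA1.trans (hS ▸ hA2.symm))
      have e2 : B₁ = B₂ := Subtype.ext (hB1.trans (hS ▸ hB2.symm))
      rw [e1, e2]
  · right
    have hS₁good : ∀ s ∈ S₁, s ≠ a ∧ s ≠ b :=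
      fun s hs => ⟨fun hc => ha1 (hc ▸ hs), fun hc => hb1 (hc ▸ hs)⟩
    have hS₂good : ∀ s ∈ S₂, s ≠ a ∧ s ≠ b :=
      fun s hs => ⟨fun hc => ha2 (hc ▸ hs), fun hc => hb2 (hc ▸ hs)⟩
    have hex : ∃ m f, TChain G a b S₁ S₂ m f :=
      tchain_connect hconn (S₁ \ S₂).card S₁ S₂ le_rfl hS₁good hS₂good
        (hc1.trans hc2.symm)
    obtain ⟨m, f, hf, hinj, hnochord⟩ := tchain_minimal hex
    have hm : 1 ≤ m := by
      rcases Nat.eq_zero_or_pos m with rfl | h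
      · exact absurd (hf.1.symm.trans hf.2.1) hS
      · exact h
    have hinv : ∀ i ≤ m, a ∉ f i ∧ b ∉ f i ∧ (f i).card = S₁.card :=
      tchain_invariant hf ha1 hb1
    have hile : ∀ i : Fin (m + 1), i.1 ≤ m := fun i => by omega
    have hcardu : ∀ i : Fin (m + 1), (insert a (f i.1)).card = k := fun i => by
      rw [Finset.card_insert_of_notMem (hinv i.1 (hile i)).1,
        (hinv i.1 (hile i)).2.2, hc1]
      omega
    have hcardv : ∀ i : Fin (m + 1), (insert b (f i.1)).card = k := fun i => by
      rw [Finset.card_insert_of_notMem (hinv i.1 (hile i)).2.1,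
        (hinv i.1 (hile i)).2.2, hc1]
      omega
    have hfinj : ∀ i j : Fin (m + 1), f i.1 = f j.1 → i = j := by
      intro i j hij
      rcases lt_trichotomy i.1 j.1 with h | h | h
      · exact absurd hij (hinj i.1 j.1 h (hile j))
      · exact Fin.ext h
      · exact absurd hij.symm (hinj j.1 i.1 h (hile i))
    -- adjacency in the token graph between the f's is exactly consecutiveness
    have hadj_iff : ∀ i j : Fin (m + 1),
        (∃ x y, G.Adj x y ∧ symmDiff (f i.1) (f j.1) = {x, y}) ↔
          (i.1 + 1 = j.1 ∨ j.1 + 1 = i.1) := by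
      intro i j
      constructor
      · intro hxy
        by_contra hcons
        push_neg at hcons
        rcases lt_trichotomy i.1 j.1 with h | h | h
        · have hstep : TStep G a b (f i.1) (f j.1) :=
            tstep_of_adj ((hinv i.1 (hile i)).2.2.trans
                (hinv j.1 (hile j)).2.2.symm)
              (hinv i.1 (hile i)).1 (hinv i.1 (hile i)).2.1
              (hinv j.1 (hile j)).1 (hinv j.1 (hile j)).2.1 hxy
          exact hnochord i.1 j.1 (by omega) (hile j) hstep
        · obtain ⟨x, y, hxy', hd⟩ := hxy
          rw [h] at hd
          rw [symmDiff_self] at hd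
          exact (Finset.insert_ne_empty x {y}) hd.symm
        · have hxy' : ∃ x y, G.Adj x y ∧ symmDiff (f j.1) (f i.1) = {x, y} := by
            obtain ⟨x, y, hxy', hd⟩ := hxy
            exact ⟨x, y, hxy', by rwa [symmDiff_comm]⟩
          have hstep : TStep G a b (f j.1) (f i.1) :=
            tstep_of_adj ((hinv j.1 (hile j)).2.2.trans
                (hinv i.1 (hile i)).2.2.symm)
              (hinv j.1 (hile j)).1 (hinv j.1 (hile j)).2.1
              (hinv i.1 (hile i)).1 (hinv i.1 (hile i)).2.1 hxy'
          exact hnochord j.1 i.1 (by omega) (hile i) hstep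
      · rintro (h | h)
        · have hstep := hf.2.2 i.1 (by omega)
          rw [h] at hstep
          exact hstep.symmDiff_eq
        · have hstep := hf.2.2 j.1 (by omega)
          rw [h] at hstep
          obtain ⟨x, y, hxy, hd⟩ := hstep.symmDiff_eq
          exact ⟨x, y, hxy, by rwa [symmDiff_comm]⟩
    refine ⟨m, fun i => ⟨insert a (f i.1), hcardu i⟩,
      fun i => ⟨insert b (f i.1), hcardv i⟩, hm, ⟨?_, ?_, ?_, ?_, ?_, ?_⟩,
      ?_, ?_⟩
    · -- u injective
      intro i j hij
      apply hfinj
      have h' : insert a (f i.1) = insert a (f j.1) := congrArg Subtype.val hij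
      have := congrArg (fun s => Finset.erase s a) h'
      simpa [Finset.erase_insert (hinv i.1 (hile i)).1,
        Finset.erase_insert (hinv j.1 (hile j)).1] using this
    · -- v injective
      intro i j hij
      apply hfinj
      have h' : insert b (f i.1) = insert b (f j.1) := congrArg Subtype.val hij
      have := congrArg (fun s => Finset.erase s b) h'
      simpa [Finset.erase_insert (hinv i.1 (hile i)).2.1,
        Finset.erase_insert (hinv j.1 (hile j)).2.1] using this
    · -- u i ≠ v j
      intro i j hc
      have h' : insert a (f i.1) = insert b (f j.1) := congrArg Subtype.val hc
      have ha' : a ∈ insert b (f j.1) := h' ▸ Finset.mem_insert_self a _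
      rcases Finset.mem_insert.mp ha' with h'' | h''
      · exact hne h''
      · exact (hinv j.1 (hile j)).1 h''
    · -- adjacency on the u side
      intro i j
      rw [tokenGraph_adj]
      have : symmDiff (insert a (f i.1)) (insert a (f j.1)) =
          symmDiff (f i.1) (f j.1) :=
        symmDiff_insert_same (hinv i.1 (hile i)).1 (hinv j.1 (hile j)).1
      rw [this]
      exact hadj_iff i j
    · -- adjacency on the v side
      intro i j
      rw [tokenGraph_adj]
      have : symmDiff (insert b (f i.1)) (insert b (f j.1)) =
          symmDiff (f i.1) (f j.1) :=
        symmDiff_insert_same (hinv i.1 (hile i)).2.1 (hinv j.1 (hile j)).2.1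
      rw [this]
      exact hadj_iff i j
    · -- rungs
      intro i j
      rw [tokenGraph_adj]
      have hd : symmDiff (insert a (f i.1)) (insert b (f j.1)) =
          insert a (insert b (symmDiff (f i.1) (f j.1))) :=
        symmDiff_insert_ne hne (hinv i.1 (hile i)).1 (hinv j.1 (hile j)).1
          (hinv i.1 (hile i)).2.1 (hinv j.1 (hile j)).2.1
      rw [hd]
      constructor
      · rintro ⟨x, y, hxy, hxyd⟩
        have haD : a ∉ symmDiff (f i.1) (f j.1) := by
          rw [Finset.mem_symmDiff]
          rintro (⟨h', -⟩ | ⟨h', -⟩)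
          · exact (hinv i.1 (hile i)).1 h'
          · exact (hinv j.1 (hile j)).1 h'
        have hbD : b ∉ symmDiff (f i.1) (f j.1) := by
          rw [Finset.mem_symmDiff]
          rintro (⟨h', -⟩ | ⟨h', -⟩)
          · exact (hinv i.1 (hile i)).2.1 h'
          · exact (hinv j.1 (hile j)).2.1 h'
        have hcard2 : ({x, y} : Finset V).card ≤ 2 := Finset.card_le_two
        have hcardD : ({x, y} : Finset V).card =
            (symmDiff (f i.1) (f j.1)).card + 2 := by
          rw [← hxyd, Finset.card_insert_of_notMem (by
              rw [Finset.mem_insert]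
              rintro (h' | h')
              · exact hne h'
              · exact haD h'),
            Finset.card_insert_of_notMem hbD]
        have hD0 : (symmDiff (f i.1) (f j.1)).card = 0 := by omega
        have hDe : symmDiff (f i.1) (f j.1) = ∅ := Finset.card_eq_zero.mp hD0
        rw [Finset.symmDiff_eq_empty] at hDe
        exact hfinj i j hDe
      · rintro rfl
        refine ⟨a, b, hab, ?_⟩
        rw [symmDiff_self]
        simp
    · -- first rung is A₁B₁
      rcases hor1 with ⟨hA1, hB1⟩ | ⟨hA1, hB1⟩
      · left
        constructor <;> apply Subtype.ext <;>
          simp only [Fin.val_zero, hf.1, hA1, hB1]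
      · right
        constructor <;> apply Subtype.ext <;>
          simp only [Fin.val_zero, hf.1, hA1, hB1]
    · -- last rung is A₂B₂
      rcases hor2 with ⟨hA2, hB2⟩ | ⟨hA2, hB2⟩
      · left
        constructor <;> apply Subtype.ext <;>
          simp only [Fin.val_last, hf.2.1, hA2, hB2]
      · right
        constructor <;> apply Subtype.ext <;>
          simp only [Fin.val_last, hf.2.1, hA2, hB2]
end
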